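/- arXiv:2010.06383 — 10 statements merged into one kernel-verified Lean document; each statement's English description precedes it below -/
import Mathlib

section
/- Let H and A be n×n complex matrices (n ≥ 1). The map t ↦ exp(H + t·A) (matrix exponential) is differentiable at t = 0 with derivative equal to ∫₀¹ exp(u·H) · A · exp((1−u)·H) du. -/
open MeasureTheory
open scoped ComplexOrder

attribute [local instance] Matrix.frobeniusNormedAddCommGroup Matrix.frobeniusNormedSpace

variable {n : ℕ}

/-- The matrix exponential. -/
noncomputable def mexp (A : Matrix (Fin n) (Fin n) ℂ) : Matrix (Fin n) (Fin n) ℂ :=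
  NormedSpace.exp A

/-- The matrix logarithm, defined by (real) functional calculus; meaningful on
positive definite matrices. -/
noncomputable def mlog (A : Matrix (Fin n) (Fin n) ℂ) : Matrix (Fin n) (Fin n) ℂ :=
  cfc Real.log A

/-- Real powers of a matrix, defined by (real) functional calculus; meaningful on
positive definite matrices. -/
noncomputable def mpow (A : Matrix (Fin n) (Fin n) ℂ) (u : ℝ) : Matrix (Fin n) (Fin n) ℂ :=
  cfc (fun x : ℝ => x ^ u) A

/-- Umegaki's relative entropy `D(ρ‖σ) = Tr ρ (log ρ - log σ)` (a real number). -/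
noncomputable def relEnt (ρ σ : Matrix (Fin n) (Fin n) ℂ) : ℝ :=
  (Matrix.trace (ρ * (mlog ρ - mlog σ))).re

/-- The Kubo transform `[A]^K_ρ = ∫₀¹ ρ^u A ρ^(1-u) du` (entrywise Bochner integral). -/
noncomputable def kubo (ρ A : Matrix (Fin n) (Fin n) ℂ) : Matrix (Fin n) (Fin n) ℂ :=
  ∫ u in (0:ℝ)..1, mpow ρ u * A * mpow ρ (1 - u)

/-- The chart centered at `ρ`: `c_ρ(σ) = log σ - log ρ + D(ρ‖σ)·I`. -/
noncomputable def chart (ρ σ : Matrix (Fin n) (Fin n) ℂ) : Matrix (Fin n) (Fin n) ℂ :=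
  mlog σ - mlog ρ + relEnt ρ σ • (1 : Matrix (Fin n) (Fin n) ℂ)

/-- The normalization `α(t) = log Tr exp((1-t)·log ρ + t·log σ)` of the exponential arc. -/
noncomputable def alpha (ρ σ : Matrix (Fin n) (Fin n) ℂ) (t : ℝ) : ℝ :=
  Real.log (Matrix.trace (mexp ((1 - t) • mlog ρ + t • mlog σ))).re

/-- The exponential arc connecting `σ` to `ρ`:
`σ_t = exp((1-t)·log ρ + t·log σ - α(t)·I)`. -/
noncomputable def arc (ρ σ : Matrix (Fin n) (Fin n) ℂ) (t : ℝ) : Matrix (Fin n) (Fin n) ℂ :=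
  mexp ((1 - t) • mlog ρ + t • mlog σ - alpha ρ σ t • (1 : Matrix (Fin n) (Fin n) ℂ))

/-- The potential `Φ_ρ(A) = log Tr exp(log ρ + A)`. -/
noncomputable def potential (ρ A : Matrix (Fin n) (Fin n) ℂ) : ℝ :=
  Real.log (Matrix.trace (mexp (mlog ρ + A))).re

/-- The density matrix `τ_A = exp(log ρ + A) / Tr exp(log ρ + A)`. -/
noncomputable def tauOf (ρ A : Matrix (Fin n) (Fin n) ℂ) : Matrix (Fin n) (Fin n) ℂ :=
  (Matrix.trace (mexp (mlog ρ + A)))⁻¹ • mexp (mlog ρ + A)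

section Stmt0Aux
open NormedSpace
attribute [local instance] Matrix.frobeniusNormedRing Matrix.frobeniusNormedAlgebra
local notation "M" => Matrix (Fin n) (Fin n) ℂ


lemma phi_deriv (X Y : M) (s : ℝ) :
    HasDerivAt (fun s : ℝ => exp (s • X) * exp ((1 - s) • Y))
      (exp (s • X) * (X - Y) * exp ((1 - s) • Y)) s := by
  have h1 : HasDerivAt (fun s : ℝ => exp (s • X)) (exp (s • X) * X) s :=
    hasDerivAt_exp_smul_const X s
  have h2 : HasDerivAt (fun s : ℝ => exp ((1 - s) • Y))
      ((-1 : ℝ) • (Y * exp ((1 - s) • Y))) s := by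
    have := (hasDerivAt_exp_smul_const' Y (1 - s)).scomp s
      ((hasDerivAt_id s).const_sub 1)
    exact this
  have := h1.mul h2
  refine this.congr_deriv ?_
  simp only [neg_one_smul, mul_neg, smul_neg]
  noncomm_ring

lemma exp_cont_aux (X Y : M) :
    Continuous (fun s : ℝ => exp (s • X) * (X - Y) * exp ((1 - s) • Y)) := by
  have e1 : Continuous (fun s : ℝ => exp (s • X)) :=
    exp_continuous.comp (continuous_id.smul continuous_const)
  have e2 : Continuous (fun s : ℝ => exp ((1 - s) • Y)) :=
    exp_continuous.comp ((continuous_const.sub continuous_id).smul continuous_const)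
  exact (e1.mul continuous_const).mul e2

lemma duhamel (X Y : M) :
    exp X - exp Y = ∫ s in (0:ℝ)..1, exp (s • X) * (X - Y) * exp ((1 - s) • Y) := by
  have h := intervalIntegral.integral_eq_sub_of_hasDerivAt
    (f := fun s : ℝ => exp (s • X) * exp ((1 - s) • Y))
    (fun s _ => phi_deriv X Y s) ((exp_cont_aux X Y).intervalIntegrable 0 1)
  rw [h]
  norm_num [exp_zero]

lemma main (H A : M) :
    HasDerivAt (fun t : ℝ => exp (H + t • A))
      (∫ u in (0:ℝ)..1, exp (u • H) * A * exp ((1 - u) • H)) 0 := by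
  set g : ℝ → M := fun t => ∫ s in (0:ℝ)..1,
    exp (s • (H + t • A)) * A * exp ((1 - s) • H) with hg_def
  have hgc : Continuous g := by
    apply intervalIntegral.continuous_parametric_intervalIntegral_of_continuous'
    apply Continuous.mul
    apply Continuous.mul
    · exact exp_continuous.comp (continuous_snd.smul
        (continuous_const.add (continuous_fst.smul continuous_const)))
    · exact continuous_const
    · exact exp_continuous.comp ((continuous_const.sub continuous_snd).smul continuous_const)
  have key : ∀ t : ℝ, exp (H + t • A) - exp H = t • g t := by
    intro t
    have h := duhamel (H + t • A) H
    simp only [add_sub_cancel_left] at h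
    rw [h, hg_def]
    rw [← intervalIntegral.integral_smul]
    congr 1; ext s
    simp only [smul_mul_assoc, mul_smul_comm]
  have hg0 : g 0 = ∫ u in (0:ℝ)..1, exp (u • H) * A * exp ((1 - u) • H) := by
    simp [hg_def]
  rw [← hg0]
  refine hasDerivAt_iff_tendsto_slope.mpr ?_
  have : ∀ t ∈ ({(0:ℝ)}ᶜ : Set ℝ), g t = slope (fun t : ℝ => exp (H + t • A)) 0 t := by
    intro t ht
    simp only [Set.mem_compl_iff, Set.mem_singleton_iff] at ht
    rw [slope_def_module, zero_smul, add_zero, key t, sub_zero, smul_smul, inv_mul_cancel₀ ht, one_smul]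
  refine Filter.Tendsto.congr' ?_ ((hgc.tendsto 0).mono_left nhdsWithin_le_nhds)
  exact Filter.eventuallyEq_of_mem self_mem_nhdsWithin this

end Stmt0Aux

/-- the map `t ↦ exp(H + t·A)` is differentiable at `t = 0` with
derivative `∫₀¹ exp(u·H)·A·exp((1-u)·H) du`. -/
theorem stmt0 (n : ℕ) (hn : 1 ≤ n) (H A : Matrix (Fin n) (Fin n) ℂ) :
    HasDerivAt (fun t : ℝ => mexp (H + t • A))
      (∫ u in (0:ℝ)..1, mexp (u • H) * A * mexp ((1 - u) • H)) 0 := by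
  simp only [mexp]
  exact main H A
end

section
/- Let ρ and σ be non-degenerate density matrices. The real-valued function α(t) = log Tr exp((1−t)·log ρ + t·log σ) is differentiable at t = 0 with derivative α′(0) = −D(ρ||σ). -/
open MeasureTheory
open scoped ComplexOrder

attribute [local instance] Matrix.frobeniusNormedAddCommGroup Matrix.frobeniusNormedSpace

variable {n : ℕ}

section AuxSection
open Nat

attribute [local instance] Matrix.frobeniusNormedRing Matrix.frobeniusNormedAlgebra

namespace Stmt2Aux

variable {n : ℕ}

abbrev Mat (n : ℕ) := Matrix (Fin n) (Fin n) ℂ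

noncomputable def trCLM (n : ℕ) : @ContinuousLinearMap ℂ ℂ _ _ (RingHom.id ℂ) (Mat n)
    PseudoMetricSpace.toUniformSpace.toTopologicalSpace _ ℂ _ _ _ _ :=
  LinearMap.toContinuousLinearMap (Matrix.traceLinearMap (Fin n) ℂ ℂ)

@[simp] lemma trCLM_apply (X : Mat n) : trCLM n X = Matrix.trace X := rfl

noncomputable def trMulCLM (B : Mat n) : Mat n →L[ℂ] ℂ :=
  LinearMap.toContinuousLinearMap
  { toFun := fun X => Matrix.trace (X * B)
    map_add' := fun X Y => by simp [Matrix.add_mul]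
    map_smul' := fun c X => by simp [Matrix.smul_mul] }

@[simp] lemma trMulCLM_apply (B X : Mat n) : trMulCLM B X = Matrix.trace (X * B) := rfl

lemma hasDerivAt_pow_aux (A B : Mat n) (k : ℕ) (t : ℝ) :
    HasDerivAt (fun s : ℝ => (A + s • B) ^ k)
      (∑ j ∈ Finset.range k, (A + t • B) ^ j * B * (A + t • B) ^ (k - 1 - j)) t := by
  induction k with
  | zero => simp only [pow_zero, Finset.range_zero, Finset.sum_empty]; exact hasDerivAt_const t (1 : Mat n)
  | succ k ih =>
    have hM : HasDerivAt (fun s : ℝ => A + s • B) B t := by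
      have h0 := ((hasDerivAt_id t).smul_const B).const_add A
      rw [one_smul] at h0
      exact h0
    have h := ih.mul hM
    set M := A + t • B with hMdef
    have : (∑ j ∈ Finset.range k, M ^ j * B * M ^ (k - 1 - j)) * M + M ^ k * B
        = ∑ j ∈ Finset.range (k + 1), M ^ j * B * M ^ (k + 1 - 1 - j) := by
      rw [Finset.sum_range_succ, Finset.sum_mul]
      congr 1
      · refine Finset.sum_congr rfl fun j hj => ?_
        have hj' : j < k := Finset.mem_range.mp hj
        have : k + 1 - 1 - j = (k - 1 - j) + 1 := by omega
        rw [this, pow_succ, ← mul_assoc]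
      · simp
    rw [← this]
    have hfun : (fun s : ℝ => (A + s • B) ^ (k + 1))
        = fun s : ℝ => (A + s • B) ^ k * (A + s • B) := by
      funext s; rw [pow_succ]
    rw [hfun]
    exact h

lemma trace_deriv_sum (A B : Mat n) (k : ℕ) (t : ℝ) :
    Matrix.trace (∑ j ∈ Finset.range k, (A + t • B) ^ j * B * (A + t • B) ^ (k - 1 - j))
      = (k : ℂ) * Matrix.trace ((A + t • B) ^ (k - 1) * B) := by
  set M := A + t • B
  rw [Matrix.trace_sum]
  have : ∀ j ∈ Finset.range k,
      Matrix.trace (M ^ j * B * M ^ (k - 1 - j)) = Matrix.trace (M ^ (k - 1) * B) := by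
    intro j hj
    have hj' : j < k := Finset.mem_range.mp hj
    rw [Matrix.trace_mul_comm, ← mul_assoc, ← pow_add,
      show k - 1 - j + j = k - 1 by omega]
  rw [Finset.sum_congr rfl this, Finset.sum_const, Finset.card_range, nsmul_eq_mul]

lemma hasDerivAt_trace_pow (A B : Mat n) (k : ℕ) (t : ℝ) :
    HasDerivAt (fun s : ℝ => (k ! : ℂ)⁻¹ * Matrix.trace ((A + s • B) ^ k))
      ((k ! : ℂ)⁻¹ * ((k : ℂ) * Matrix.trace ((A + t • B) ^ (k - 1) * B))) t := by
  have h := ((trCLM n).restrictScalars ℝ).hasFDerivAt.comp_hasDerivAt t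
    (hasDerivAt_pow_aux A B k t)
  simp only [ContinuousLinearMap.coe_restrictScalars', Function.comp_def, trCLM_apply] at h
  rw [trace_deriv_sum] at h
  exact h.const_mul _


lemma norm_pow_mul_le (M B : Mat n) (j : ℕ) : ‖M ^ j * B‖ ≤ ‖M‖ ^ j * ‖B‖ := by
  cases j with
  | zero => simp
  | succ j =>
    calc ‖M ^ (j+1) * B‖ ≤ ‖M ^ (j+1)‖ * ‖B‖ := norm_mul_le _ _
    _ ≤ ‖M‖ ^ (j+1) * ‖B‖ :=
      mul_le_mul_of_nonneg_right (norm_pow_le' M j.succ_pos) (norm_nonneg B)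

lemma keyC (A B : Mat n) :
    HasDerivAt (fun t : ℝ => Matrix.trace (NormedSpace.exp (A + t • B)))
      (Matrix.trace (NormedSpace.exp A * B)) 0 := by
  set x : ℝ := ‖A‖ + ‖B‖ with hxdef
  have hx0 : 0 ≤ x := by positivity
  set C : ℝ := ‖trCLM n‖ * ‖B‖ with hCdef
  have hC0 : 0 ≤ C := by positivity
  set u : ℕ → ℝ := fun k => C * (x ^ (k - 1) / (k - 1)!) with hudef
  have hv : Summable (fun j : ℕ => x ^ j / j !) := Real.summable_pow_div_factorial x
  have hu : Summable u := by
    apply Summable.mul_left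
    rw [← summable_nat_add_iff 1]
    simpa using hv
  set g : ℕ → ℝ → ℂ := fun k t => (k ! : ℂ)⁻¹ * Matrix.trace ((A + t • B) ^ k) with hgdef
  set g' : ℕ → ℝ → ℂ :=
    fun k t => (k ! : ℂ)⁻¹ * ((k : ℂ) * Matrix.trace ((A + t • B) ^ (k - 1) * B)) with hg'def
  have hbound : ∀ k, ∀ y ∈ Metric.ball (0 : ℝ) 1, ‖g' k y‖ ≤ u k := by
    intro k y hy
    have hyn : |y| ≤ 1 := le_of_lt (by simpa using hy)
    have hMx : ‖A + y • B‖ ≤ x := by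
      calc ‖A + y • B‖ ≤ ‖A‖ + ‖y • B‖ := norm_add_le _ _
      _ = ‖A‖ + |y| * ‖B‖ := by rw [norm_smul, Real.norm_eq_abs]
      _ ≤ ‖A‖ + 1 * ‖B‖ := by
        have := mul_le_mul_of_nonneg_right hyn (norm_nonneg B)
        linarith
      _ = x := by rw [one_mul]
    cases k with
    | zero => simp [hg'def, hudef, hC0]
    | succ k =>
      have h1 : ‖Matrix.trace ((A + y • B) ^ k * B)‖ ≤ ‖trCLM n‖ * (x ^ k * ‖B‖) := by
        calc ‖Matrix.trace ((A + y • B) ^ k * B)‖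
            = ‖trCLM n ((A + y • B) ^ k * B)‖ := by rw [trCLM_apply]
        _ ≤ ‖trCLM n‖ * ‖(A + y • B) ^ k * B‖ := (trCLM n).le_opNorm _
        _ ≤ ‖trCLM n‖ * (‖A + y • B‖ ^ k * ‖B‖) := by
            apply mul_le_mul_of_nonneg_left (norm_pow_mul_le _ _ _) (norm_nonneg _)
        _ ≤ ‖trCLM n‖ * (x ^ k * ‖B‖) := by
            apply mul_le_mul_of_nonneg_left _ (norm_nonneg _)
            exact mul_le_mul_of_nonneg_right (pow_le_pow_left₀ (norm_nonneg _) hMx k)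
              (norm_nonneg _)
      have h2 : ‖g' (k+1) y‖
          = (((k+1)! : ℕ) : ℝ)⁻¹ * ((((k+1):ℕ) : ℝ) * ‖Matrix.trace ((A + y • B) ^ k * B)‖) := by
        rw [hg'def]
        simp only [Nat.add_sub_cancel]
        rw [norm_mul, norm_mul, norm_inv, Complex.norm_natCast, Complex.norm_natCast]
      rw [h2]
      push_cast
      have hfacne : ((k)! : ℝ) ≠ 0 := by
        exact_mod_cast Nat.factorial_ne_zero k
      have h3 : (((k+1) * (k)! : ℕ) : ℝ)⁻¹ * ((k:ℝ)+1) = ((k)! : ℝ)⁻¹ := by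
        push_cast
        rw [mul_inv]
        field_simp
      calc (((k+1)! : ℕ) : ℝ)⁻¹ * (((k:ℝ)+1) * ‖Matrix.trace ((A + y • B) ^ k * B)‖)
          ≤ (((k+1)! : ℕ) : ℝ)⁻¹ * (((k:ℝ)+1) * (‖trCLM n‖ * (x ^ k * ‖B‖))) := by
            apply mul_le_mul_of_nonneg_left _ (by positivity)
            exact mul_le_mul_of_nonneg_left h1 (by positivity)
      _ = u (k+1) := by
          rw [Nat.factorial_succ, ← mul_assoc, h3, hudef]
          simp only [Nat.add_sub_cancel]
          ring
  have hsum : ∀ (M : Mat n), Summable (fun k : ℕ => (k ! : ℂ)⁻¹ • M ^ k) :=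
    fun M => NormedSpace.expSeries_summable' (𝕂 := ℂ) M
  have hg0 : Summable (fun k => g k 0) := by
    have := ((hsum (A + (0:ℝ) • B)).mapL (trCLM n))
    simpa [hgdef, smul_eq_mul] using this
  have main := hasDerivAt_tsum_of_isPreconnected hu Metric.isOpen_ball
    ((convex_ball (0:ℝ) 1).isPreconnected)
    (fun k y _ => hasDerivAt_trace_pow A B k y) hbound
    (Metric.mem_ball_self one_pos) hg0 (Metric.mem_ball_self one_pos)
  have hfun : (fun z : ℝ => ∑' k, g k z)
      = fun t : ℝ => Matrix.trace (NormedSpace.exp (A + t • B)) := by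
    funext t
    have he : NormedSpace.exp (A + t • B) = ∑' k : ℕ, (k ! : ℂ)⁻¹ • (A + t • B) ^ k := by
      rw [NormedSpace.exp_eq_tsum (𝕂 := ℂ)]
    rw [he, ← trCLM_apply]
    erw [(trCLM n).map_tsum (hsum _)]
    simp [hgdef, smul_eq_mul]
  have hg'sum : Summable (fun k => g' k 0) :=
    Summable.of_norm_bounded hu (fun k => hbound k 0 (Metric.mem_ball_self one_pos))
  have hval : (∑' k, g' k 0) = Matrix.trace (NormedSpace.exp A * B) := by
    rw [hg'sum.tsum_eq_zero_add]
    have h0 : g' 0 0 = 0 := by simp [hg'def]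
    have hsucc : ∀ k : ℕ, g' (k+1) 0 = (k ! : ℂ)⁻¹ * Matrix.trace (A ^ k * B) := by
      intro k
      have hne : ((k:ℂ) + 1) ≠ 0 := Nat.cast_add_one_ne_zero k
      have hfac : ((k)! : ℂ) ≠ 0 := by exact_mod_cast Nat.factorial_ne_zero k
      simp only [hg'def, Nat.factorial_succ, Nat.add_sub_cancel, zero_smul, add_zero]
      push_cast
      rw [mul_inv]
      field_simp
    rw [h0, zero_add]
    have : (fun k : ℕ => g' (k+1) 0) = fun k : ℕ => trMulCLM B ((k ! : ℂ)⁻¹ • A ^ k) := by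
      funext k
      rw [hsucc k]
      simp [Matrix.smul_mul, smul_eq_mul]
    rw [this, ← (trMulCLM B).map_tsum (hsum A)]
    have he : NormedSpace.exp A = ∑' k : ℕ, (k ! : ℂ)⁻¹ • A ^ k := by
      rw [NormedSpace.exp_eq_tsum (𝕂 := ℂ)]
    rw [he, trMulCLM_apply]
  rw [hfun] at main
  rw [← hval]
  exact main

end Stmt2Aux
end AuxSection
attribute [local instance] Matrix.frobeniusNormedRing Matrix.frobeniusNormedAlgebra

section Stmt2Proof
open Stmt2Aux

/-- `α` is differentiable at `t = 0` with `α'(0) = -D(ρ‖σ)`. -/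
theorem stmt2 (n : ℕ) (hn : 1 ≤ n) (ρ σ : Matrix (Fin n) (Fin n) ℂ)
    (hρ : ρ.PosDef) (hρ1 : ρ.trace = 1) (hσ : σ.PosDef) (hσ1 : σ.trace = 1) :
    HasDerivAt (alpha ρ σ) (-relEnt ρ σ) 0 := by
  classical
  have hρsa : IsSelfAdjoint ρ := hρ.1.isSelfAdjoint
  have hρspec : ∀ x ∈ spectrum ℝ ρ, 0 < x := by
    intro x hx
    rw [hρ.1.spectrum_real_eq_range_eigenvalues] at hx
    obtain ⟨i, rfl⟩ := hx
    exact hρ.eigenvalues_pos i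
  have hexp : NormedSpace.exp (mlog ρ) = ρ := by
    letI : NormedRing (Matrix (Fin n) (Fin n) ℂ) := Matrix.instL2OpNormedRing
    letI : NormedAlgebra ℂ (Matrix (Fin n) (Fin n) ℂ) := Matrix.instL2OpNormedAlgebra
    rw [show mlog ρ = CFC.log ρ from rfl]
    open scoped MatrixOrder in exact CFC.exp_log ρ hρ.isStrictlyPositive
  have hkey := Stmt2Aux.keyC (mlog ρ) (mlog σ - mlog ρ)
  have hre := Complex.reCLM.hasFDerivAt.comp_hasDerivAt 0 hkey
  set f : ℝ → ℝ :=
    fun t => (Matrix.trace (NormedSpace.exp (mlog ρ + t • (mlog σ - mlog ρ)))).re with hfdef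
  have href : HasDerivAt f ((Matrix.trace (ρ * (mlog σ - mlog ρ))).re) 0 := by
    rw [hexp] at hre
    exact hre
  have hf0 : f 0 = 1 := by
    rw [hfdef]
    simp only [zero_smul, add_zero, hexp, hρ1]
    norm_num
  have hL : HasDerivAt Real.log (1 : ℝ)⁻¹ (f 0) := by
    rw [hf0]; exact Real.hasDerivAt_log one_ne_zero
  have hcomp := hL.comp 0 href
  have halpha : alpha ρ σ = Real.log ∘ f := by
    funext t
    have harg : (1 - t) • mlog ρ + t • mlog σ = mlog ρ + t • (mlog σ - mlog ρ) := by
      rw [sub_smul, one_smul, smul_sub]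
      abel
    simp only [alpha, mexp, Function.comp_apply, hfdef, harg]
  have hval : (1 : ℝ)⁻¹ * (Matrix.trace (ρ * (mlog σ - mlog ρ))).re = -relEnt ρ σ := by
    have : ρ * (mlog σ - mlog ρ) = -(ρ * (mlog ρ - mlog σ)) := by
      rw [Matrix.mul_sub, Matrix.mul_sub]
      abel
    rw [this, Matrix.trace_neg, relEnt]
    simp
  rw [halpha, ← hval]
  exact hcomp

end Stmt2Proof
end

section
/- Let ρ and σ be non-degenerate density matrices and let t ↦ σ_t be the exponential arc connecting σ to ρ. Then t ↦ σ_t is differentiable at t = 0 and its derivative there equals the Kubo transform [c_ρ(σ)]^K_ρ = ∫₀¹ ρ^u (log σ − log ρ + D(ρ||σ)·I) ρ^{1−u} du. -/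
open MeasureTheory
open scoped ComplexOrder

attribute [local instance] Matrix.frobeniusNormedAddCommGroup Matrix.frobeniusNormedSpace

variable {n : ℕ}

namespace Stmt3Aux

open NormedSpace


variable {n : ℕ}

local notation "Mat" => Matrix (Fin n) (Fin n) ℂ

attribute [local instance] Matrix.instL2OpMetricSpace Matrix.instL2OpNormedAddCommGroup
  Matrix.instL2OpNormedRing Matrix.instL2OpNormedSpace Matrix.instL2OpNormedAlgebra

noncomputable abbrev matNormedSpaceReal : NormedSpace ℝ Mat :=
  { (Matrix.module : Module ℝ Mat) with
    norm_smul_le := fun r A => by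
      rw [← algebraMap_smul ℂ r A]
      exact (norm_smul_le _ _).trans (le_of_eq (by rw [norm_algebraMap'])) }
noncomputable abbrev matNormedAlgebraReal : NormedAlgebra ℝ Mat :=
  { (Matrix.instAlgebra : Algebra ℝ Mat) with
    norm_smul_le := fun r A => by
      rw [← algebraMap_smul ℂ r A]
      exact (norm_smul_le _ _).trans (le_of_eq (by rw [norm_algebraMap'])) }
noncomputable abbrev matNormedAlgebraRat : NormedAlgebra ℚ Mat :=
  { (Matrix.instAlgebra : Algebra ℚ Mat) with
    norm_smul_le := fun r A => by
      rw [← algebraMap_smul ℂ r A]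
      exact (norm_smul_le _ _).trans (le_of_eq (by rw [norm_algebraMap'])) }
attribute [local instance] matNormedSpaceReal matNormedAlgebraReal matNormedAlgebraRat

lemma hasDerivAt_expPath (A C : Mat) (u : ℝ) :
    HasDerivAt (fun v : ℝ => exp (v • A) * exp ((1 - v) • C))
      (exp (u • A) * (A - C) * exp ((1 - u) • C)) u := by
  have h1 : HasDerivAt (fun v : ℝ => exp (v • A)) (exp (u • A) * A) u :=
    hasDerivAt_exp_smul_const A u
  have h2 : HasDerivAt (fun v : ℝ => exp ((1 - v) • C))
      (-(exp ((1 - u) • C) * C)) u := by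
    have h3 : HasDerivAt (fun v : ℝ => (1 : ℝ) - v) (-1) u := by
      simpa using (hasDerivAt_id u).const_sub 1
    simpa [neg_one_smul, Function.comp_def] using (hasDerivAt_exp_smul_const C (1 - u)).scomp u h3
  have h := h1.mul h2
  refine h.congr_deriv ?_
  have hc : Commute C (exp ((1 - u) • C)) := ((Commute.refl C).smul_right (1 - u)).exp_right
  rw [← hc.eq]
  noncomm_ring


lemma exp_continuous' : Continuous (exp : Mat → Mat) :=
  exp_continuous

lemma exp_sub_exp (A C : Mat) :
    exp A - exp C = ∫ u in (0:ℝ)..1, exp (u • A) * (A - C) * exp ((1 - u) • C) := by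
  have hcont : Continuous fun u : ℝ => exp (u • A) * (A - C) * exp ((1 - u) • C) := by
    apply Continuous.mul
    apply Continuous.mul
    · exact exp_continuous.comp (by fun_prop)
    · exact continuous_const
    · exact exp_continuous.comp (by fun_prop)
  rw [intervalIntegral.integral_eq_sub_of_hasDerivAt (fun u _ => hasDerivAt_expPath A C u)
      (hcont.intervalIntegrable 0 1)]
  simp [exp_zero]


lemma hasDerivAt_exp_affine (X B : Mat) :
    HasDerivAt (fun t : ℝ => exp (X + t • B))
      (∫ u in (0:ℝ)..1, exp (u • X) * B * exp ((1 - u) • X)) 0 := by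
  set φ : ℝ → ℝ → Mat := fun t u => exp (u • (X + t • B)) * B * exp ((1 - u) • X) with hφ
  have hφcont : Continuous fun p : ℝ × ℝ => φ p.1 p.2 := by
    apply Continuous.mul
    apply Continuous.mul
    · exact exp_continuous.comp (by fun_prop)
    · exact continuous_const
    · exact exp_continuous.comp (by fun_prop)
  set G : ℝ → Mat := fun t => ∫ u in (0:ℝ)..1, φ t u with hG
  have key : ∀ t : ℝ, exp (X + t • B) - exp X = t • G t := by
    intro t
    have h := exp_sub_exp (X + t • B) X
    simp only [add_sub_cancel_left] at h
    rw [h, hG, ← intervalIntegral.integral_smul]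
    congr 1
    funext u
    rw [hφ]
    rw [mul_smul_comm, smul_mul_assoc]
  -- continuity of G at 0
  have hGcont : ContinuousAt G 0 := by
    obtain ⟨C, hC⟩ := (((isCompact_Icc (a := (-1:ℝ)) (b := 1)).prod
      (isCompact_Icc (a := (0:ℝ)) (b := 1)))).exists_bound_of_continuousOn
      hφcont.continuousOn
    apply intervalIntegral.continuousAt_of_dominated_interval (bound := fun _ => C)
    · filter_upwards with t
      exact ((hφcont.comp (Continuous.prodMk_right t)).aestronglyMeasurable)
    · filter_upwards [Icc_mem_nhds (by norm_num : (-1:ℝ) < 0) (by norm_num : (0:ℝ) < 1)] with t ht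
      filter_upwards with u hu
      have hu' : u ∈ Set.Icc (0:ℝ) 1 := by
        rw [Set.uIoc_of_le (by norm_num : (0:ℝ) ≤ 1)] at hu
        exact ⟨le_of_lt hu.1, hu.2⟩
      exact hC (t, u) ⟨ht, hu'⟩
    · exact intervalIntegrable_const
    · filter_upwards with u _
      exact (hφcont.comp (continuous_id.prodMk continuous_const)).continuousAt
  rw [hasDerivAt_iff_tendsto_slope]
  have hslope : ∀ᶠ t in nhdsWithin (0:ℝ) {(0:ℝ)}ᶜ,
      slope (fun t : ℝ => exp (X + t • B)) 0 t = G t := by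
    filter_upwards [self_mem_nhdsWithin] with t ht
    have ht' : t ≠ 0 := ht
    rw [slope_def_module]
    simp only [zero_smul, add_zero, sub_zero]
    rw [key t, smul_smul, inv_mul_cancel₀ ht', one_smul]
  have hG0 : G 0 = ∫ u in (0:ℝ)..1, exp (u • X) * B * exp ((1 - u) • X) := by
    simp [hG, hφ]
  rw [← hG0]
  exact Filter.Tendsto.congr' (Filter.EventuallyEq.symm hslope)
    (hGcont.tendsto.mono_left nhdsWithin_le_nhds)


open scoped ComplexOrder in
lemma spectrum_pos {ρ : Mat} (hρ : ρ.PosDef) : ∀ x ∈ spectrum ℝ ρ, 0 < x := by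
  rw [hρ.1.spectrum_real_eq_range_eigenvalues]
  rintro x ⟨i, rfl⟩
  exact hρ.eigenvalues_pos i

open scoped ComplexOrder in
lemma exp_mlog {ρ : Mat} (hρ : ρ.PosDef) : exp (cfc Real.log ρ) = ρ := by
  have hlogcont : ContinuousOn Real.log (spectrum ℝ ρ) := fun x hx =>
    (Real.continuousAt_log (ne_of_gt (spectrum_pos hρ x hx))).continuousWithinAt
  rw [← CFC.real_exp_eq_normedSpace_exp (cfc_predicate _ ρ)]
  refine (cfc_comp Real.exp Real.log ρ hρ.1 Real.continuous_exp.continuousOn hlogcont).symm.trans ?_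
  conv_rhs => rw [← cfc_id ℝ ρ hρ.1]
  apply cfc_congr
  intro x hx
  simp [Real.exp_log (spectrum_pos hρ x hx)]

open scoped ComplexOrder in
lemma mpow_eq_exp {ρ : Mat} (hρ : ρ.PosDef) (u : ℝ) :
    cfc (fun x : ℝ => x ^ u) ρ = exp (u • cfc Real.log ρ) := by
  have hsa : IsSelfAdjoint ρ := hρ.1
  have hlogcont : ContinuousOn Real.log (spectrum ℝ ρ) := fun x hx =>
    (Real.continuousAt_log (ne_of_gt (spectrum_pos hρ x hx))).continuousWithinAt
  have h1 : u • cfc Real.log ρ = cfc (fun x : ℝ => u * Real.log x) ρ := by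
    rw [← cfc_smul u Real.log ρ hlogcont]
    simp [smul_eq_mul]
  rw [h1, ← CFC.real_exp_eq_normedSpace_exp (cfc_predicate _ ρ),
    ← cfc_comp Real.exp (fun x : ℝ => u * Real.log x) ρ hsa
      Real.continuous_exp.continuousOn (continuousOn_const.mul hlogcont)]
  apply cfc_congr
  intro x hx
  have hxpos := spectrum_pos hρ x hx
  simp only [Function.comp_apply]
  rw [Real.rpow_def_of_pos hxpos, mul_comm]


lemma exp_smul_add_smul (L : Mat) (u : ℝ) :
    exp (u • L) * exp ((1 - u) • L) = exp L := by
  rw [← NormedSpace.exp_add_of_commute (((Commute.refl L).smul_left u).smul_right (1 - u))]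
  rw [← add_smul]
  norm_num

lemma exp_sub_smul_one (Y : Mat) (r : ℝ) :
    exp (Y - r • (1 : Mat)) = Real.exp (-r) • exp Y := by
  have hc : Commute Y ((-r) • (1 : Mat)) := (Commute.one_right Y).smul_right _
  have h1 : exp ((-r) • (1 : Mat)) = Real.exp (-r) • (1 : Mat) := by
    rw [← Algebra.algebraMap_eq_smul_one, ← map_exp (algebraMap ℝ Mat)
      (continuous_algebraMap ℝ Mat), Real.exp_eq_exp_ℝ, Algebra.algebraMap_eq_smul_one]
  rw [sub_eq_add_neg, ← neg_smul, NormedSpace.exp_add_of_commute hc, h1,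
    mul_smul_comm, mul_one]

/-- Trace (real part) as a continuous linear map over ℝ. -/
noncomputable def traceCLM : Mat →L[ℂ] ℂ :=
  LinearMap.toContinuousLinearMap (Matrix.traceLinearMap (Fin n) ℂ ℂ)

lemma traceCLM_apply (A : Mat) : traceCLM A = Matrix.trace A := rfl

noncomputable def traceRe : Mat →L[ℝ] ℝ :=
  Complex.reCLM.comp (traceCLM.restrictScalars ℝ)

lemma traceRe_apply (A : Mat) : traceRe A = (Matrix.trace A).re := rfl

lemma integral_lequiv {E P : Type*} [NormedAddCommGroup E] [NormedSpace ℝ E]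
    [NormedAddCommGroup P] [NormedSpace ℝ P] [FiniteDimensional ℝ P] (g : P ≃ₗ[ℝ] E)
    (f : ℝ → E) (a b : ℝ) :
    ∫ u in a..b, g.symm (f u) = g.symm (∫ u in a..b, f u) := by
  let e : P ≃L[ℝ] E := g.toContinuousLinearEquiv
  simp only [intervalIntegral, map_sub]
  exact congrArg₂ (· - ·) (e.symm.integral_comp_comm _) (e.symm.integral_comp_comm _)

lemma integral_frob (f : ℝ → Mat) :
    @intervalIntegral Mat Matrix.frobeniusNormedAddCommGroup Matrix.frobeniusNormedSpace f 0 1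
      MeasureTheory.volume = ∫ u in (0:ℝ)..1, f u := by
  let g1 : @LinearEquiv ℝ ℝ _ _ (RingHom.id ℝ) (RingHom.id ℝ) _ _ (Fin n → Fin n → ℂ) Mat _
      Matrix.frobeniusNormedAddCommGroup.toAddCommGroup.toAddCommMonoid _
      Matrix.frobeniusNormedSpace.toModule :=
    { toFun := fun x => x, invFun := fun x => x, map_add' := fun _ _ => rfl,
      map_smul' := fun _ _ => rfl, left_inv := fun _ => rfl, right_inv := fun _ => rfl }
  let g2 : (Fin n → Fin n → ℂ) ≃ₗ[ℝ] Mat :=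
    { toFun := fun x => x, invFun := fun x => x, map_add' := fun _ _ => rfl,
      map_smul' := fun _ _ => rfl, left_inv := fun _ => rfl, right_inv := fun _ => rfl }
  have h1 := @integral_lequiv Mat (Fin n → Fin n → ℂ) Matrix.frobeniusNormedAddCommGroup
    Matrix.frobeniusNormedSpace _ _ _ g1 f 0 1
  have h2 := integral_lequiv g2 f 0 1
  exact h1.symm.trans h2

lemma mexp_eq (A : Mat) : mexp A = exp A := by
  rw [mexp]

open scoped ComplexOrder in
lemma mpow_eq_exp' {ρ : Mat} (hρ : ρ.PosDef) (u : ℝ) :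
    mpow ρ u = exp (u • mlog ρ) := mpow_eq_exp hρ u

theorem main (ρ σ : Matrix (Fin n) (Fin n) ℂ)
    (hρ : ρ.PosDef) (hρ1 : ρ.trace = 1) (hσ : σ.PosDef) :
    HasDerivAt (fun t : ℝ => arc ρ σ t) (kubo ρ (chart ρ σ)) 0 := by
  set B : Mat := mlog σ - mlog ρ with hB
  set L : Mat := mlog ρ with hL
  set F : ℝ → Mat := fun t => exp (L + t • B) with hF
  have hLρ : exp L = ρ := exp_mlog hρ
  have hFρ : F 0 = ρ := by
    rw [hF]; simp only [zero_smul, add_zero]; exact hLρ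
  have haffine : ∀ t : ℝ, (1 - t) • mlog ρ + t • mlog σ = L + t • B := by
    intro t
    rw [hB, hL, sub_smul, one_smul, smul_sub]
    abel
  set K : Mat := ∫ u in (0:ℝ)..1, exp (u • L) * B * exp ((1 - u) • L) with hKdef
  have hK : HasDerivAt F K 0 := hasDerivAt_exp_affine L B
  -- integrability of the K integrand
  have hKint : IntervalIntegrable (fun u : ℝ => exp (u • L) * B * exp ((1 - u) • L))
      MeasureTheory.volume 0 1 := by
    apply Continuous.intervalIntegrable
    apply Continuous.mul
    apply Continuous.mul
    · exact exp_continuous.comp (by fun_prop)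
    · exact continuous_const
    · exact exp_continuous.comp (by fun_prop)
  -- trace of K
  have hQP : ∀ u : ℝ, exp ((1 - u) • L) * exp (u • L) = ρ := by
    intro u
    have := exp_smul_add_smul L (1 - u)
    rw [show (1 : ℝ) - (1 - u) = u by ring] at this
    rw [this, hLρ]
  have htraceK : traceCLM K = Matrix.trace (ρ * B) := by
    rw [hKdef, ← ContinuousLinearMap.intervalIntegral_comp_comm traceCLM hKint]
    have : ∀ u : ℝ, traceCLM (exp (u • L) * B * exp ((1 - u) • L))
        = Matrix.trace (ρ * B) := by
      intro u
      rw [traceCLM_apply, Matrix.trace_mul_cycle, hQP u]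
    rw [intervalIntegral.integral_congr (fun u _ => this u)]
    simp
  -- derivative of the trace
  set c : ℝ := (Matrix.trace (ρ * B)).re with hc
  have hTr : HasDerivAt (fun t => (Matrix.trace (F t)).re) c 0 := by
    have h := traceRe.hasFDerivAt.comp_hasDerivAt 0 hK
    have h2 : traceRe K = c := by
      rw [traceRe, hc]
      simp only [ContinuousLinearMap.coe_comp', Function.comp_apply,
        ContinuousLinearMap.coe_restrictScalars']
      rw [htraceK]
      rfl
    rw [h2] at h
    exact h
  have hF0re : (Matrix.trace (F 0)).re = 1 := by rw [hFρ, hρ1]; simp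
  have halpha : ∀ t : ℝ, alpha ρ σ t = Real.log (Matrix.trace (F t)).re := by
    intro t
    rw [alpha, haffine t, mexp_eq]
  have hα : HasDerivAt (alpha ρ σ) c 0 := by
    have hne : (Matrix.trace (F 0)).re ≠ 0 := by rw [hF0re]; norm_num
    have h := (Real.hasDerivAt_log hne).comp 0 hTr
    have : (Matrix.trace (F 0)).re⁻¹ * c = c := by rw [hF0re]; simp
    rw [this] at h
    have hfun : alpha ρ σ = fun t => Real.log (Matrix.trace (F t)).re := funext halpha
    rw [hfun]
    exact h
  have hα0 : alpha ρ σ 0 = 0 := by rw [halpha, hF0re, Real.log_one]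
  -- the scalar factor
  have hexpα : HasDerivAt (fun t => Real.exp (-(alpha ρ σ t))) (-c) 0 := by
    have h := (Real.hasDerivAt_exp (-(alpha ρ σ 0))).comp 0 hα.neg
    rw [hα0] at h
    simpa [Function.comp_def] using h
  -- arc as scalar • F
  have harc : (fun t : ℝ => arc ρ σ t) = fun t => Real.exp (-(alpha ρ σ t)) • F t := by
    funext t
    rw [arc, mexp_eq, haffine t, exp_sub_smul_one]
  -- assemble
  have hfinal : HasDerivAt (fun t : ℝ => arc ρ σ t) ((1:ℝ) • K + (-c) • ρ) 0 := by
    rw [harc]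
    have h := hexpα.smul hK
    rw [hα0, hFρ] at h
    simpa [Pi.smul_def'] using h
  -- identify the derivative with kubo ρ (chart ρ σ)
  have hD : relEnt ρ σ = -c := by
    rw [relEnt, hc]
    have : ρ * (mlog ρ - mlog σ) = -(ρ * B) := by rw [hB, mul_sub, mul_sub]; abel
    rw [this, Matrix.trace_neg]
    simp
  have hkubo : kubo ρ (chart ρ σ) = K + relEnt ρ σ • ρ := by
    rw [kubo, chart, ← hB]
    rw [integral_frob]
    have hint : ∀ u : ℝ, mpow ρ u * (B + relEnt ρ σ • 1) * mpow ρ (1 - u)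
        = exp (u • L) * B * exp ((1 - u) • L) + relEnt ρ σ • ρ := by
      intro u
      rw [mpow_eq_exp' hρ, mpow_eq_exp' hρ, ← hL, mul_add, add_mul, mul_smul_comm, mul_one,
        smul_mul_assoc, exp_smul_add_smul, hLρ]
    rw [intervalIntegral.integral_congr (fun u _ => hint u),
      intervalIntegral.integral_add hKint intervalIntegrable_const,
      intervalIntegral.integral_const]
    rw [← hKdef]
    norm_num
  rw [hkubo, hD]
  simpa using hfinal

end Stmt3Aux

/-- the exponential arc connecting `σ` to `ρ` is differentiable at `t = 0`
with derivative the Kubo transform `[c_ρ(σ)]^K_ρ`. -/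
theorem stmt3 (n : ℕ) (hn : 1 ≤ n) (ρ σ : Matrix (Fin n) (Fin n) ℂ)
    (hρ : ρ.PosDef) (hρ1 : ρ.trace = 1) (hσ : σ.PosDef) (hσ1 : σ.trace = 1) :
    HasDerivAt (fun t : ℝ => arc ρ σ t) (kubo ρ (chart ρ σ)) 0 := by
  exact Stmt3Aux.main ρ σ hρ hρ1 hσ
end

section
/- Let ρ be a positive definite n×n complex matrix. For every n×n complex matrix V there exists an n×n complex matrix A such that V = [A]^K_ρ. If V is Hermitian then A can be chosen Hermitian, and if in addition Tr V = 0 then this A satisfies Tr ρA = 0. -/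
open MeasureTheory
open scoped ComplexOrder

attribute [local instance] Matrix.frobeniusNormedAddCommGroup Matrix.frobeniusNormedSpace

variable {n : ℕ}

open scoped Matrix

section KuboAux

variable {n : ℕ} {ρ : Matrix (Fin n) (Fin n) ℂ}

lemma spec_pos (hρ : ρ.PosDef) : ∀ x ∈ spectrum ℝ ρ, 0 < x := by
  intro x hx
  rw [hρ.1.spectrum_real_eq_range_eigenvalues] at hx
  obtain ⟨i, rfl⟩ := hx
  exact hρ.eigenvalues_pos i

lemma rpow_contOn (hρ : ρ.PosDef) (u : ℝ) :
    ContinuousOn (fun x : ℝ => x ^ u) (spectrum ℝ ρ) := fun x hx =>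
  (Real.continuousAt_rpow_const x u (Or.inl (spec_pos hρ x hx).ne')).continuousWithinAt

lemma mpow_add (hρ : ρ.PosDef) (a b : ℝ) : mpow ρ a * mpow ρ b = mpow ρ (a + b) := by
  rw [mpow, mpow, mpow, ← cfc_mul _ _ ρ (rpow_contOn hρ a) (rpow_contOn hρ b)]
  exact cfc_congr fun x hx => (Real.rpow_add (spec_pos hρ x hx) a b).symm

lemma mpow_zero (hρ : ρ.PosDef) : mpow ρ 0 = 1 := by
  rw [mpow]
  calc cfc (fun x : ℝ => x ^ (0:ℝ)) ρ = cfc (fun _ : ℝ => (1:ℝ)) ρ :=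
        cfc_congr fun x _ => Real.rpow_zero x
    _ = 1 := cfc_const_one ℝ ρ hρ.1

lemma mpow_one (hρ : ρ.PosDef) : mpow ρ 1 = ρ := by
  rw [mpow]
  calc cfc (fun x : ℝ => x ^ (1:ℝ)) ρ = cfc (id : ℝ → ℝ) ρ :=
        cfc_congr fun x _ => Real.rpow_one x
    _ = ρ := cfc_id ℝ ρ hρ.1

lemma mpow_sa (u : ℝ) : (mpow ρ u)ᴴ = mpow ρ u :=
  (cfc_predicate (fun x : ℝ => x ^ u) ρ : IsSelfAdjoint _)

lemma mpow_continuous (hρ : ρ.PosDef) : Continuous (fun u : ℝ => mpow ρ u) := by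
  have h : ∀ u : ℝ, mpow ρ u = hρ.1.cfc (fun x => x ^ u) := fun u => hρ.1.cfc_eq _
  simp only [h, Matrix.IsHermitian.cfc, Unitary.conjStarAlgAut_apply]
  refine (Continuous.matrix_mul (Continuous.matrix_mul continuous_const ?_) continuous_const)
  refine Continuous.matrix_diagonal (continuous_pi fun i => ?_)
  simp only [Function.comp]
  have : ∀ u : ℝ, hρ.1.eigenvalues i ^ u = Real.exp (Real.log (hρ.1.eigenvalues i) * u) :=
    fun u => Real.rpow_def_of_pos (hρ.eigenvalues_pos i) u
  simp only [this]
  exact Complex.continuous_ofReal.comp (Real.continuous_exp.comp (continuous_const.mul continuous_id))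

lemma kubo_cont (hρ : ρ.PosDef) (A : Matrix (Fin n) (Fin n) ℂ) :
    Continuous (fun u : ℝ => mpow ρ u * A * mpow ρ (1 - u)) :=
  ((mpow_continuous hρ).matrix_mul continuous_const).matrix_mul
    ((mpow_continuous hρ).comp (continuous_const.sub continuous_id))

lemma kubo_intg (hρ : ρ.PosDef) (A : Matrix (Fin n) (Fin n) ℂ) :
    @IntervalIntegrable _ _ NormedAddGroup.toENormedAddMonoid
      (fun u : ℝ => mpow ρ u * A * mpow ρ (1 - u)) volume 0 1 :=
  (kubo_cont hρ A).intervalIntegrable 0 1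

lemma kubo_add (hρ : ρ.PosDef) (A B : Matrix (Fin n) (Fin n) ℂ) :
    kubo ρ (A + B) = kubo ρ A + kubo ρ B := by
  unfold kubo
  rw [← intervalIntegral.integral_add (kubo_intg hρ A) (kubo_intg hρ B)]
  simp only [mul_add, add_mul]

lemma kubo_smul (hρ : ρ.PosDef) (c : ℂ) (A : Matrix (Fin n) (Fin n) ℂ) :
    kubo ρ (c • A) = c • kubo ρ A := by
  unfold kubo
  rw [← intervalIntegral.integral_smul]
  simp only [Matrix.mul_smul, Matrix.smul_mul]

noncomputable def traceCLM (n : ℕ) : Matrix (Fin n) (Fin n) ℂ →L[ℂ] ℂ :=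
  LinearMap.toContinuousLinearMap (Matrix.traceLinearMap (Fin n) ℂ ℂ)

lemma trace_kubo (hρ : ρ.PosDef) (A : Matrix (Fin n) (Fin n) ℂ) :
    (kubo ρ A).trace = (ρ * A).trace := by
  have h1 : (kubo ρ A).trace = traceCLM n (kubo ρ A) := rfl
  erw [h1, kubo, ← ContinuousLinearMap.intervalIntegral_comp_comm _ (kubo_intg hρ A)]
  have h2 : ∀ u : ℝ, traceCLM n (mpow ρ u * A * mpow ρ (1 - u)) = (ρ * A).trace := by
    intro u
    show (mpow ρ u * A * mpow ρ (1 - u)).trace = (ρ * A).trace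
    rw [Matrix.trace_mul_comm, ← mul_assoc, mpow_add hρ]
    norm_num [mpow_one hρ]
  erw [intervalIntegral.integral_congr (fun u _ => h2 u)]
  simp only [intervalIntegral.integral_const, sub_zero, one_smul]

noncomputable def starCLM (n : ℕ) : Matrix (Fin n) (Fin n) ℂ →L[ℝ] Matrix (Fin n) (Fin n) ℂ :=
  LinearMap.toContinuousLinearMap
    { toFun := fun M => Mᴴ
      map_add' := fun M N => Matrix.conjTranspose_add M N
      map_smul' := fun r M => by
        ext i j
        simp [Matrix.conjTranspose_apply, Matrix.smul_apply, Complex.real_smul] }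

lemma star_kubo (hρ : ρ.PosDef) (A : Matrix (Fin n) (Fin n) ℂ) :
    (kubo ρ A)ᴴ = kubo ρ Aᴴ := by
  have h1 : (kubo ρ A)ᴴ = starCLM n (kubo ρ A) := rfl
  erw [h1, kubo, ← ContinuousLinearMap.intervalIntegral_comp_comm _ (kubo_intg hρ A)]
  have h2 : ∀ u : ℝ, starCLM n (mpow ρ u * A * mpow ρ (1 - u))
      = mpow ρ (1 - u) * Aᴴ * mpow ρ (1 - (1 - u)) := by
    intro u
    show (mpow ρ u * A * mpow ρ (1 - u))ᴴ = _
    rw [Matrix.conjTranspose_mul, Matrix.conjTranspose_mul, mpow_sa, mpow_sa, sub_sub_cancel,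
      mul_assoc]
  erw [intervalIntegral.integral_congr (fun u _ => h2 u)]
  rw [show (fun u : ℝ => mpow ρ (1 - u) * Aᴴ * mpow ρ (1 - (1 - u)))
      = (fun u : ℝ => (fun v : ℝ => mpow ρ v * Aᴴ * mpow ρ (1 - v)) (1 - u)) from rfl,
    intervalIntegral.integral_comp_sub_left (fun v : ℝ => mpow ρ v * Aᴴ * mpow ρ (1 - v)) 1]
  norm_num [kubo]

lemma trace_self_re (B : Matrix (Fin n) (Fin n) ℂ) :
    (Matrix.trace (Bᴴ * B)).re = ∑ j, ∑ i, Complex.normSq (B i j) := by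
  have hz : ∀ z : ℂ, star z * z = (Complex.normSq z : ℂ) := fun z => by
    rw [Complex.star_def, mul_comm, Complex.mul_conj]
  simp [Matrix.trace, Matrix.diag, Matrix.mul_apply, Matrix.conjTranspose_apply, hz,
    Complex.re_sum, Complex.normSq_apply]

lemma trace_self_re_pos {B : Matrix (Fin n) (Fin n) ℂ} (hB : B ≠ 0) :
    0 < (Matrix.trace (Bᴴ * B)).re := by
  rw [trace_self_re]
  have : ∃ i j, B i j ≠ 0 := by
    by_contra h
    push_neg at h
    exact hB (by ext i j; simpa using h i j)
  obtain ⟨i, j, hij⟩ := this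
  refine Finset.sum_pos' (fun j _ => Finset.sum_nonneg fun i _ => Complex.normSq_nonneg _)
    ⟨j, Finset.mem_univ j, Finset.sum_pos' (fun i _ => Complex.normSq_nonneg _)
      ⟨i, Finset.mem_univ i, ?_⟩⟩
  exact (Complex.normSq_pos).mpr hij

lemma trace_sandwich (P Q A : Matrix (Fin n) (Fin n) ℂ) (hP : Pᴴ = P) (hQ : Qᴴ = Q) :
    Matrix.trace (Aᴴ * ((P * P) * A * (Q * Q)))
      = Matrix.trace ((P * A * Q)ᴴ * (P * A * Q)) := by
  calc Matrix.trace (Aᴴ * ((P * P) * A * (Q * Q)))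
      = Matrix.trace ((Aᴴ * (P * (P * (A * Q)))) * Q) := by simp only [mul_assoc]
    _ = Matrix.trace (Q * (Aᴴ * (P * (P * (A * Q))))) := Matrix.trace_mul_comm _ _
    _ = Matrix.trace ((P * A * Q)ᴴ * (P * A * Q)) := by
        rw [Matrix.conjTranspose_mul, Matrix.conjTranspose_mul, hP, hQ]
        simp only [mul_assoc]

lemma kubo_pos_aux (hρ : ρ.PosDef) {A : Matrix (Fin n) (Fin n) ℂ} (hA : A ≠ 0) (u : ℝ) :
    0 < (Matrix.trace (Aᴴ * (mpow ρ u * A * mpow ρ (1 - u)))).re := by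
  have hP : mpow ρ (u/2) * mpow ρ (u/2) = mpow ρ u := by
    rw [mpow_add hρ, add_halves]
  have hQ : mpow ρ ((1-u)/2) * mpow ρ ((1-u)/2) = mpow ρ (1-u) := by
    rw [mpow_add hρ, add_halves]
  rw [← hP, ← hQ, trace_sandwich _ _ _ (mpow_sa _) (mpow_sa _)]
  apply trace_self_re_pos
  intro h0
  apply hA
  have hfact : mpow ρ (-(u/2)) * (mpow ρ (u/2) * A * mpow ρ ((1-u)/2)) * mpow ρ (-((1-u)/2))
      = A := by
    calc mpow ρ (-(u/2)) * (mpow ρ (u/2) * A * mpow ρ ((1-u)/2)) * mpow ρ (-((1-u)/2))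
        = (mpow ρ (-(u/2)) * mpow ρ (u/2)) * (A * (mpow ρ ((1-u)/2) * mpow ρ (-((1-u)/2)))) := by
          simp only [mul_assoc]
      _ = A := by
          rw [mpow_add hρ, mpow_add hρ]
          norm_num [mpow_zero hρ]
  rw [← hfact, h0]
  simp

noncomputable def reTraceCLM (n : ℕ) (C : Matrix (Fin n) (Fin n) ℂ) :
    Matrix (Fin n) (Fin n) ℂ →L[ℝ] ℝ :=
  LinearMap.toContinuousLinearMap
    { toFun := fun M => (Matrix.trace (C * M)).re
      map_add' := by intro M N; simp [Matrix.mul_add]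
      map_smul' := by
        intro r M
        simp [Matrix.mul_smul, Complex.real_smul] }

lemma kubo_inj (hρ : ρ.PosDef) {A : Matrix (Fin n) (Fin n) ℂ} (h : kubo ρ A = 0) : A = 0 := by
  by_contra hA
  have hEq : ∀ u : ℝ, (Matrix.trace (Aᴴ * (mpow ρ u * A * mpow ρ (1 - u)))).re
      = reTraceCLM n Aᴴ (mpow ρ u * A * mpow ρ (1 - u)) := fun u => rfl
  have hpos : 0 < ∫ u in (0:ℝ)..1,
      (Matrix.trace (Aᴴ * (mpow ρ u * A * mpow ρ (1 - u)))).re := by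
    apply intervalIntegral.intervalIntegral_pos_of_pos_on
    · refine Continuous.intervalIntegrable ?_ 0 1
      simp only [hEq]
      exact (reTraceCLM n Aᴴ).continuous.comp (kubo_cont hρ A)
    · intro x _
      exact kubo_pos_aux hρ hA x
    · norm_num
  have hz : (∫ u in (0:ℝ)..1,
      (Matrix.trace (Aᴴ * (mpow ρ u * A * mpow ρ (1 - u)))).re) = 0 := by
    simp only [hEq]
    erw [ContinuousLinearMap.intervalIntegral_comp_comm (reTraceCLM n Aᴴ) (kubo_intg hρ A)]
    show (Matrix.trace (Aᴴ * kubo ρ A)).re = 0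
    rw [h]
    simp
  rw [hz] at hpos
  exact lt_irrefl _ hpos

noncomputable def kuboL (hρ : ρ.PosDef) :
    Matrix (Fin n) (Fin n) ℂ →ₗ[ℂ] Matrix (Fin n) (Fin n) ℂ where
  toFun := kubo ρ
  map_add' := kubo_add hρ
  map_smul' := kubo_smul hρ

lemma kuboL_inj (hρ : ρ.PosDef) : Function.Injective (kuboL (n := n) hρ) := by
  intro a b hab
  have : kubo ρ (a - b) = 0 := by
    have := map_sub (kuboL (n := n) hρ) a b
    simp only [kuboL, LinearMap.coe_mk, AddHom.coe_mk] at this hab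
    rw [this, hab, sub_self]
  have := kubo_inj hρ this
  exact sub_eq_zero.mp this

lemma kuboL_surj (hρ : ρ.PosDef) : Function.Surjective (kuboL (n := n) hρ) :=
  LinearMap.injective_iff_surjective.mp (kuboL_inj hρ)


end KuboAux

/-- every matrix `V` is the Kubo transform of some `A`; if `V` is Hermitian
then `A` can be chosen Hermitian, and if in addition `Tr V = 0` then `Tr ρA = 0`. -/
theorem stmt4 (n : ℕ) (hn : 1 ≤ n) (ρ : Matrix (Fin n) (Fin n) ℂ) (hρ : ρ.PosDef) :
    (∀ V : Matrix (Fin n) (Fin n) ℂ, ∃ A, V = kubo ρ A) ∧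
    (∀ V : Matrix (Fin n) (Fin n) ℂ, V.IsHermitian →
      ∃ A, V = kubo ρ A ∧ A.IsHermitian ∧ (V.trace = 0 → (ρ * A).trace = 0)) := by
  constructor
  · intro V
    obtain ⟨A, hA⟩ := kuboL_surj hρ V
    exact ⟨A, hA.symm⟩
  · intro V hV
    obtain ⟨A, hA⟩ := kuboL_surj hρ V
    have hA' : kubo ρ A = V := hA
    refine ⟨A, hA'.symm, ?_, ?_⟩
    · have h1 : kuboL (n := n) hρ Aᴴ = kuboL (n := n) hρ A := by
        show kubo ρ Aᴴ = kubo ρ A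
        rw [← star_kubo hρ, hA']
        exact hV
      exact kuboL_inj hρ h1
    · intro hVtr
      rw [← trace_kubo hρ, hA', hVtr]
end

section
/- Let ρ be a positive definite n×n complex matrix. The Kubo transform A ↦ [A]^K_ρ is injective: if [A]^K_ρ = 0 then A = 0. Consequently A ↦ [A]^K_ρ is a linear bijection of the space of n×n complex matrices onto itself. -/
open MeasureTheory
open scoped ComplexOrder

attribute [local instance] Matrix.frobeniusNormedAddCommGroup Matrix.frobeniusNormedSpace

variable {n : ℕ}

/-- the Kubo transform is injective, hence a linear bijection of the space
of `n×n` complex matrices onto itself. -/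
theorem stmt5 (n : ℕ) (hn : 1 ≤ n) (ρ : Matrix (Fin n) (Fin n) ℂ) (hρ : ρ.PosDef) :
    (∀ A : Matrix (Fin n) (Fin n) ℂ, kubo ρ A = 0 → A = 0) ∧
    IsLinearMap ℂ (fun A : Matrix (Fin n) (Fin n) ℂ => kubo ρ A) ∧
    Function.Bijective (fun A : Matrix (Fin n) (Fin n) ℂ => kubo ρ A) := by
    classical
  have hH : ρ.IsHermitian := hρ.1
  set U : Matrix (Fin n) (Fin n) ℂ := (hH.eigenvectorUnitary : Matrix (Fin n) (Fin n) ℂ) with hUdef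
  have hUU : star U * U = 1 := Unitary.star_mul_self_of_mem hH.eigenvectorUnitary.2
  have hUU' : U * star U = 1 := Unitary.mul_star_self_of_mem hH.eigenvectorUnitary.2
  set lam : Fin n → ℝ := hH.eigenvalues with hlamdef
  have hlam : ∀ i, 0 < lam i := hρ.eigenvalues_pos
  set D : ℝ → Matrix (Fin n) (Fin n) ℂ :=
    fun u => Matrix.diagonal (fun i => ((lam i ^ u : ℝ) : ℂ)) with hDdef
  have hmpow : ∀ u, mpow ρ u = U * D u * star U := by
    intro u; rw [mpow, hH.cfc_eq]; rfl
  have hDcont : Continuous D := by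
    apply Continuous.matrix_diagonal
    apply continuous_pi
    intro i
    have : (fun u : ℝ => ((lam i ^ u : ℝ) : ℂ))
        = fun u => ((Real.exp (Real.log (lam i) * u) : ℝ) : ℂ) := by
      funext u; rw [Real.rpow_def_of_pos (hlam i)]
    rw [this]
    exact Complex.continuous_ofReal.comp
      (Real.continuous_exp.comp (continuous_const.mul continuous_id))
  have hDcont' : Continuous (fun u : ℝ => D (1 - u)) :=
    hDcont.comp (continuous_const.sub continuous_id)
  -- continuity / integrability of the integrand
  have hcont : ∀ A : Matrix (Fin n) (Fin n) ℂ,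
      Continuous (fun u : ℝ => mpow ρ u * A * mpow ρ (1 - u)) := by
    intro A
    have : (fun u : ℝ => mpow ρ u * A * mpow ρ (1 - u))
        = fun u => U * D u * star U * A * (U * D (1 - u) * star U) := by
      funext u; rw [hmpow, hmpow]
    rw [this]
    exact ((((continuous_const.matrix_mul hDcont).matrix_mul continuous_const).matrix_mul
      continuous_const).matrix_mul
      ((continuous_const.matrix_mul hDcont').matrix_mul continuous_const))
  have hii : ∀ A : Matrix (Fin n) (Fin n) ℂ,
      @IntervalIntegrable _
        Matrix.frobeniusNormedAddCommGroup.toPseudoMetricSpace.toUniformSpace.toTopologicalSpace _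
        (fun u : ℝ => mpow ρ u * A * mpow ρ (1 - u)) volume 0 1 :=
    fun A => (hcont A).intervalIntegrable 0 1
  -- scalar integrals
  set c : Fin n → Fin n → ℝ := fun i j => ∫ u in (0:ℝ)..1, lam i ^ u * lam j ^ (1 - u) with hcdef
  have hscont : ∀ i j : Fin n, Continuous (fun u : ℝ => lam i ^ u * lam j ^ (1 - u)) := by
    intro i j
    have h1 : (fun u : ℝ => lam i ^ u * lam j ^ (1 - u))
        = fun u => Real.exp (Real.log (lam i) * u) * Real.exp (Real.log (lam j) * (1 - u)) := by
      funext u; rw [Real.rpow_def_of_pos (hlam i), Real.rpow_def_of_pos (hlam j)]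
    rw [h1]
    exact (Real.continuous_exp.comp (continuous_const.mul continuous_id)).mul
      (Real.continuous_exp.comp (continuous_const.mul (continuous_const.sub continuous_id)))
  have hcpos : ∀ i j : Fin n, 0 < c i j := by
    intro i j
    apply intervalIntegral.intervalIntegral_pos_of_pos
    · exact (hscont i j).intervalIntegrable 0 1
    · intro x
      exact mul_pos (Real.rpow_pos_of_pos (hlam i) _) (Real.rpow_pos_of_pos (hlam j) _)
    · norm_num
  -- the conjugation continuous linear map
  let Lc : Matrix (Fin n) (Fin n) ℂ →ₗ[ℝ] Matrix (Fin n) (Fin n) ℂ :=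
    { toFun := fun X => star U * X * U
      map_add' := fun X Y => by simp [Matrix.mul_add, Matrix.add_mul]
      map_smul' := fun r X => by simp [Matrix.mul_smul, Matrix.smul_mul] }
  have key : ∀ A : Matrix (Fin n) (Fin n) ℂ, ∀ i j : Fin n,
      (star U * kubo ρ A * U) i j = (c i j : ℂ) * (star U * A * U) i j := by
    intro A i j
    have h1 : star U * kubo ρ A * U = Lc.toContinuousLinearMap (kubo ρ A) := rfl
    rw [h1, kubo]
    erw [← ContinuousLinearMap.intervalIntegral_comp_comm Lc.toContinuousLinearMap (hii A)]
    have h2 : (fun u : ℝ => Lc.toContinuousLinearMap (mpow ρ u * A * mpow ρ (1 - u)))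
        = fun u => D u * (star U * A * U) * D (1 - u) := by
      funext u
      show star U * (mpow ρ u * A * mpow ρ (1 - u)) * U = _
      rw [hmpow, hmpow]
      simp only [Matrix.mul_one, ← Matrix.mul_assoc]
      rw [hUU, Matrix.one_mul, Matrix.mul_assoc _ (star U) U, hUU, Matrix.mul_one]
    erw [h2]
    -- entry of the integral
    let E : Matrix (Fin n) (Fin n) ℂ →ₗ[ℝ] ℂ :=
      { toFun := fun X => X i j, map_add' := fun _ _ => rfl, map_smul' := fun _ _ => rfl }
    have h3 : (∫ u in (0:ℝ)..1, D u * (star U * A * U) * D (1 - u)) i j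
        = ∫ u in (0:ℝ)..1, (D u * (star U * A * U) * D (1 - u)) i j := by
      have := E.toContinuousLinearMap.intervalIntegral_comp_comm
        (f := fun u : ℝ => D u * (star U * A * U) * D (1 - u)) (μ := volume) (a := 0) (b := 1)
        (((hDcont.matrix_mul continuous_const).matrix_mul hDcont').intervalIntegrable 0 1)
      exact this.symm
    rw [h3]
    have h4 : (fun u : ℝ => (D u * (star U * A * U) * D (1 - u)) i j)
        = fun u => ((lam i ^ u * lam j ^ (1 - u) : ℝ) : ℂ) * (star U * A * U) i j := by
      funext u
      simp only [hDdef, Matrix.diagonal_mul, Matrix.mul_diagonal]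
      push_cast
      ring
    rw [h4, intervalIntegral.integral_mul_const, intervalIntegral.integral_ofReal]
  -- injectivity
  have hinj0 : ∀ A : Matrix (Fin n) (Fin n) ℂ, kubo ρ A = 0 → A = 0 := by
    intro A hA
    have hB : star U * A * U = 0 := by
      ext i j
      have := key A i j
      rw [hA] at this
      simp only [Matrix.mul_zero, Matrix.zero_mul, Matrix.zero_apply] at this
      have hc0 : ((c i j : ℂ)) ≠ 0 := by
        exact_mod_cast (hcpos i j).ne'
      have := this.symm
      rcases mul_eq_zero.mp this with h | h
      · exact absurd h hc0
      · simpa using h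
    have : U * (star U * A * U) * star U = 0 := by rw [hB]; simp
    rw [← Matrix.mul_assoc, ← Matrix.mul_assoc, hUU'] at this
    rw [Matrix.one_mul, Matrix.mul_assoc, hUU', Matrix.mul_one] at this
    exact this
  -- linearity
  have hlin : IsLinearMap ℂ (fun A : Matrix (Fin n) (Fin n) ℂ => kubo ρ A) := by
    constructor
    · intro A B
      show kubo ρ (A + B) = kubo ρ A + kubo ρ B
      rw [kubo, kubo, kubo, ← intervalIntegral.integral_add (hii A) (hii B)]
      congr 1
      funext u
      simp [Matrix.mul_add, Matrix.add_mul]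
    · intro r A
      show kubo ρ (r • A) = r • kubo ρ A
      rw [kubo, kubo, ← intervalIntegral.integral_smul]
      congr 1
      funext u
      simp [Matrix.mul_smul, Matrix.smul_mul]
  refine ⟨hinj0, hlin, ?_⟩
  let L : Matrix (Fin n) (Fin n) ℂ →ₗ[ℂ] Matrix (Fin n) (Fin n) ℂ := IsLinearMap.mk' _ hlin
  have hinj : Function.Injective L := (injective_iff_map_eq_zero L).mpr hinj0
  exact ⟨hinj, LinearMap.injective_iff_surjective.mp hinj⟩
end

section
/- Let ρ, σ, τ be non-degenerate density matrices. If [c_ρ(σ)]^K_ρ = [c_ρ(τ)]^K_ρ, then σ = τ. In other words, if the exponential arcs connecting σ and τ to ρ have the same tangent vector at t = 0, they coincide. -/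
open MeasureTheory
open scoped ComplexOrder

attribute [local instance] Matrix.frobeniusNormedAddCommGroup Matrix.frobeniusNormedSpace

variable {n : ℕ}

section aux

variable {A : Matrix (Fin n) (Fin n) ℂ}

lemma star_mul_self_eigen (hA : A.IsHermitian) :
    star (hA.eigenvectorUnitary : Matrix (Fin n) (Fin n) ℂ) * hA.eigenvectorUnitary = 1 :=
  Unitary.star_mul_self_of_mem (SetLike.coe_mem _)

lemma mul_star_self_eigen (hA : A.IsHermitian) :
    (hA.eigenvectorUnitary : Matrix (Fin n) (Fin n) ℂ) * star (hA.eigenvectorUnitary : Matrix (Fin n) (Fin n) ℂ) = 1 :=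
  Unitary.mul_star_self_of_mem (SetLike.coe_mem _)

lemma mexp_cfc (hA : A.IsHermitian) (f : ℝ → ℝ) :
    mexp (Matrix.IsHermitian.cfc hA f) = Matrix.IsHermitian.cfc hA (fun x => Real.exp (f x)) := by
  let Uu : (Matrix (Fin n) (Fin n) ℂ)ˣ :=
    ⟨(hA.eigenvectorUnitary : Matrix (Fin n) (Fin n) ℂ), star (hA.eigenvectorUnitary : Matrix (Fin n) (Fin n) ℂ),
      mul_star_self_eigen hA, star_mul_self_eigen hA⟩
  have key := Matrix.exp_units_conj Uu
    (Matrix.diagonal ((RCLike.ofReal : ℝ → ℂ) ∘ f ∘ hA.eigenvalues))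
  rw [Matrix.IsHermitian.cfc, Matrix.IsHermitian.cfc]
  show NormedSpace.exp ((Uu : Matrix (Fin n) (Fin n) ℂ) * _ * (↑Uu⁻¹ : Matrix (Fin n) (Fin n) ℂ)) = _
  have hdiag : NormedSpace.exp ((RCLike.ofReal : ℝ → ℂ) ∘ f ∘ hA.eigenvalues)
      = (RCLike.ofReal : ℝ → ℂ) ∘ (fun x => Real.exp (f x)) ∘ hA.eigenvalues := by
    funext i
    simp only [Pi.exp_def, Function.comp_apply]
    rw [← Complex.exp_eq_exp_ℂ]
    exact (Complex.ofReal_exp _).symm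
  rw [key, Matrix.exp_diagonal, hdiag]
  rfl

end aux

section aux2
variable {A : Matrix (Fin n) (Fin n) ℂ}

lemma real_smul_mat (r : ℝ) (M : Matrix (Fin n) (Fin n) ℂ) : r • M = (r : ℂ) • M := by
  ext i j
  simp [Complex.real_smul]

lemma cfc_congr' (hA : A.IsHermitian) {f g : ℝ → ℝ}
    (h : ∀ i, f (hA.eigenvalues i) = g (hA.eigenvalues i)) : hA.cfc f = hA.cfc g := by
  have : (RCLike.ofReal : ℝ → ℂ) ∘ f ∘ hA.eigenvalues
      = (RCLike.ofReal : ℝ → ℂ) ∘ g ∘ hA.eigenvalues := by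
    funext i; simp [h i]
  rw [Matrix.IsHermitian.cfc, Matrix.IsHermitian.cfc, this]

lemma mcfc_id (hA : A.IsHermitian) : hA.cfc id = A := by
  rw [Matrix.IsHermitian.cfc, Function.id_comp]
  exact hA.spectral_theorem.symm

lemma mcfc_add_const (hA : A.IsHermitian) (f : ℝ → ℝ) (c : ℝ) :
    hA.cfc (fun x => f x + c) = hA.cfc f + (c : ℂ) • 1 := by
  rw [Matrix.IsHermitian.cfc, Matrix.IsHermitian.cfc, Unitary.conjStarAlgAut_apply,
    Unitary.conjStarAlgAut_apply]
  have h1 : Matrix.diagonal ((RCLike.ofReal : ℝ → ℂ) ∘ (fun x => f x + c) ∘ hA.eigenvalues)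
      = Matrix.diagonal ((RCLike.ofReal : ℝ → ℂ) ∘ f ∘ hA.eigenvalues) + (c : ℂ) • 1 := by
    ext i j
    by_cases hij : i = j <;>
      simp [Matrix.diagonal_apply, hij, Matrix.one_apply]
  rw [h1, Matrix.mul_add, Matrix.add_mul]
  congr 1
  rw [Matrix.mul_smul, Matrix.smul_mul, Matrix.mul_one, mul_star_self_eigen hA]

lemma mcfc_const_mul (hA : A.IsHermitian) (f : ℝ → ℝ) (r : ℝ) :
    hA.cfc (fun x => r * f x) = (r : ℂ) • hA.cfc f := by
  rw [Matrix.IsHermitian.cfc, Matrix.IsHermitian.cfc, Unitary.conjStarAlgAut_apply,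
    Unitary.conjStarAlgAut_apply]
  have h1 : (RCLike.ofReal : ℝ → ℂ) ∘ (fun x => r * f x) ∘ hA.eigenvalues
      = (r : ℂ) • ((RCLike.ofReal : ℝ → ℂ) ∘ f ∘ hA.eigenvalues) := by
    funext i; simp
  rw [h1, Matrix.diagonal_smul, Matrix.mul_smul, Matrix.smul_mul]

lemma mexp_mlog {σ : Matrix (Fin n) (Fin n) ℂ} (hσ : σ.PosDef) : mexp (mlog σ) = σ := by
  rw [mlog, Matrix.IsHermitian.cfc_eq hσ.1, mexp_cfc hσ.1]
  rw [cfc_congr' hσ.1 (g := id) (fun i => Real.exp_log (hσ.eigenvalues_pos i))]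
  exact mcfc_id hσ.1

lemma mexp_mlog_add_const {τ : Matrix (Fin n) (Fin n) ℂ} (hτ : τ.PosDef) (c : ℝ) :
    mexp (mlog τ + c • (1 : Matrix (Fin n) (Fin n) ℂ)) = Real.exp c • τ := by
  rw [real_smul_mat, mlog, Matrix.IsHermitian.cfc_eq hτ.1, ← mcfc_add_const hτ.1 Real.log c,
    mexp_cfc hτ.1]
  rw [cfc_congr' hτ.1 (g := fun x => Real.exp c * x)
    (fun i => by rw [Real.exp_add, Real.exp_log (hτ.eigenvalues_pos i)]; ring)]
  rw [show (fun x => Real.exp c * x) = (fun x => Real.exp c * id x) from rfl,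
    mcfc_const_mul hτ.1 id (Real.exp c), mcfc_id hτ.1, real_smul_mat]

end aux2

section kubo
variable {ρ : Matrix (Fin n) (Fin n) ℂ}

lemma mpow_eq (hρ : ρ.PosDef) (u : ℝ) :
    mpow ρ u = (hρ.1.eigenvectorUnitary : Matrix (Fin n) (Fin n) ℂ) *
      Matrix.diagonal (fun i => ((hρ.1.eigenvalues i ^ u : ℝ) : ℂ)) *
      star (hρ.1.eigenvectorUnitary : Matrix (Fin n) (Fin n) ℂ) := by
  rw [mpow, Matrix.IsHermitian.cfc_eq hρ.1, Matrix.IsHermitian.cfc]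
  rfl

lemma conj_expand (hρ : ρ.PosDef) (X Y : Matrix (Fin n) (Fin n) ℂ) :
    star (hρ.1.eigenvectorUnitary : Matrix (Fin n) (Fin n) ℂ) * (X * Y) * hρ.1.eigenvectorUnitary
      = (star (hρ.1.eigenvectorUnitary : Matrix (Fin n) (Fin n) ℂ) * X * hρ.1.eigenvectorUnitary) *
        (star (hρ.1.eigenvectorUnitary : Matrix (Fin n) (Fin n) ℂ) * Y * hρ.1.eigenvectorUnitary) := by
  set V : Matrix (Fin n) (Fin n) ℂ := (hρ.1.eigenvectorUnitary : Matrix (Fin n) (Fin n) ℂ)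
  have h1 : V * star V = 1 := mul_star_self_eigen hρ.1
  have key : (star V * X * V) * (star V * Y * V) = star V * X * (V * star V) * (Y * V) := by
    simp only [Matrix.mul_assoc]
  rw [key, h1, Matrix.mul_one]
  simp only [Matrix.mul_assoc]

lemma conj_mpow (hρ : ρ.PosDef) (u : ℝ) :
    star (hρ.1.eigenvectorUnitary : Matrix (Fin n) (Fin n) ℂ) * mpow ρ u * hρ.1.eigenvectorUnitary
      = Matrix.diagonal (fun i => ((hρ.1.eigenvalues i ^ u : ℝ) : ℂ)) := by
  set V : Matrix (Fin n) (Fin n) ℂ := (hρ.1.eigenvectorUnitary : Matrix (Fin n) (Fin n) ℂ)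
  have h2 : star V * V = 1 := star_mul_self_eigen hρ.1
  rw [mpow_eq hρ]
  have key : star V * (V * Matrix.diagonal (fun i => ((hρ.1.eigenvalues i ^ u : ℝ) : ℂ)) * star V) * V
      = (star V * V) * Matrix.diagonal (fun i => ((hρ.1.eigenvalues i ^ u : ℝ) : ℂ)) * (star V * V) := by
    simp only [Matrix.mul_assoc]
  rw [key, h2, Matrix.one_mul, Matrix.mul_one]

lemma continuous_mpow (hρ : ρ.PosDef) : Continuous fun u : ℝ => mpow ρ u := by
  have hc : ∀ k, Continuous fun u : ℝ => ((hρ.1.eigenvalues k ^ u : ℝ) : ℂ) := fun k =>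
    Complex.continuous_ofReal.comp
      (continuous_iff_continuousAt.2 fun x => Real.continuousAt_const_rpow (hρ.eigenvalues_pos k).ne')
  simp only [mpow_eq hρ]
  exact (continuous_const.matrix_mul ((continuous_pi hc).matrix_diagonal)).matrix_mul
    continuous_const

lemma kubo_conj_entry (hρ : ρ.PosDef) (A : Matrix (Fin n) (Fin n) ℂ) (i j : Fin n) :
    (star (hρ.1.eigenvectorUnitary : Matrix (Fin n) (Fin n) ℂ) * kubo ρ A * hρ.1.eigenvectorUnitary) i j
      = ((∫ u in (0:ℝ)..1, hρ.1.eigenvalues i ^ u * hρ.1.eigenvalues j ^ (1 - u) : ℝ) : ℂ) *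
        ((star (hρ.1.eigenvectorUnitary : Matrix (Fin n) (Fin n) ℂ) * A * hρ.1.eigenvectorUnitary) i j) := by
  set V : Matrix (Fin n) (Fin n) ℂ := (hρ.1.eigenvectorUnitary : Matrix (Fin n) (Fin n) ℂ) with hV
  set d : Fin n → ℝ := hρ.1.eigenvalues with hdd
  have hcont : Continuous fun u : ℝ => mpow ρ u * A * mpow ρ (1 - u) :=
    ((continuous_mpow hρ).matrix_mul continuous_const).matrix_mul
      ((continuous_mpow hρ).comp (continuous_const.sub continuous_id))
  have hint := hcont.intervalIntegrable (μ := volume) 0 1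
  let L : Matrix (Fin n) (Fin n) ℂ →ₗ[ℂ] ℂ :=
    { toFun := fun M => (star V * M * V) i j
      map_add' := fun M N => by simp [Matrix.mul_add, Matrix.add_mul]
      map_smul' := fun c M => by simp [Matrix.mul_smul, Matrix.smul_mul] }
  have hL : (star V * kubo ρ A * V) i j = L.toContinuousLinearMap (kubo ρ A) := rfl
  rw [hL, kubo]
  refine (ContinuousLinearMap.intervalIntegral_comp_comm L.toContinuousLinearMap hint).symm.trans ?_
  have hrw : (fun u : ℝ => L.toContinuousLinearMap (mpow ρ u * A * mpow ρ (1 - u)))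
      = fun u : ℝ => ((d i ^ u * d j ^ (1 - u) : ℝ) : ℂ) * ((star V * A * V) i j) := by
    funext u
    show (star V * (mpow ρ u * A * mpow ρ (1 - u)) * V) i j = _
    rw [show mpow ρ u * A * mpow ρ (1 - u) = mpow ρ u * (A * mpow ρ (1 - u)) from
      Matrix.mul_assoc _ _ _, conj_expand hρ, conj_expand hρ, conj_mpow hρ, conj_mpow hρ]
    rw [← Matrix.mul_assoc]
    rw [Matrix.mul_diagonal, Matrix.diagonal_mul]
    push_cast
    ring
  show (∫ u in (0:ℝ)..1, (fun u : ℝ => L.toContinuousLinearMap (mpow ρ u * A * mpow ρ (1 - u))) u) = _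
  rw [hrw, intervalIntegral.integral_mul_const, intervalIntegral.integral_ofReal]

lemma weight_pos (hρ : ρ.PosDef) (i j : Fin n) :
    0 < ∫ u in (0:ℝ)..1, hρ.1.eigenvalues i ^ u * hρ.1.eigenvalues j ^ (1 - u) := by
  have hc : Continuous fun u : ℝ => hρ.1.eigenvalues i ^ u * hρ.1.eigenvalues j ^ (1 - u) := by
    have h1 : Continuous fun u : ℝ => hρ.1.eigenvalues i ^ u :=
      continuous_iff_continuousAt.2 fun x =>
        Real.continuousAt_const_rpow (hρ.eigenvalues_pos i).ne'
    have h2 : Continuous fun u : ℝ => hρ.1.eigenvalues j ^ (1 - u) :=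
      (continuous_iff_continuousAt.2 fun x =>
        Real.continuousAt_const_rpow (hρ.eigenvalues_pos j).ne').comp
          (continuous_const.sub continuous_id)
    exact h1.mul h2
  refine intervalIntegral.intervalIntegral_pos_of_pos (hc.intervalIntegrable 0 1) (fun x => ?_) zero_lt_one
  exact mul_pos (Real.rpow_pos_of_pos (hρ.eigenvalues_pos i) _)
    (Real.rpow_pos_of_pos (hρ.eigenvalues_pos j) _)

end kubo

/-- two exponential arcs starting at `ρ` with the same tangent vector at
`t = 0` coincide: `[c_ρ(σ)]^K_ρ = [c_ρ(τ)]^K_ρ` implies `σ = τ`. -/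
theorem stmt8 (n : ℕ) (hn : 1 ≤ n) (ρ σ τ : Matrix (Fin n) (Fin n) ℂ)
    (hρ : ρ.PosDef) (hρ1 : ρ.trace = 1) (hσ : σ.PosDef) (hσ1 : σ.trace = 1)
    (hτ : τ.PosDef) (hτ1 : τ.trace = 1)
    (h : kubo ρ (chart ρ σ) = kubo ρ (chart ρ τ)) :
    σ = τ := by

  classical
  set V : Matrix (Fin n) (Fin n) ℂ := (hρ.1.eigenvectorUnitary : Matrix (Fin n) (Fin n) ℂ) with hV
  have h1 : V * star V = 1 := mul_star_self_eigen hρ.1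
  have hchart : chart ρ σ = chart ρ τ := by
    have hM : star V * chart ρ σ * V = star V * chart ρ τ * V := by
      ext i j
      have e1 := kubo_conj_entry hρ (chart ρ σ) i j
      have e2 := kubo_conj_entry hρ (chart ρ τ) i j
      rw [h] at e1
      have e3 := e1.symm.trans e2
      exact mul_left_cancel₀ (Complex.ofReal_ne_zero.mpr (weight_pos hρ i j).ne') e3
    have key : ∀ C : Matrix (Fin n) (Fin n) ℂ, V * (star V * C * V) * star V = C := by
      intro C
      have e1 : V * (star V * C * V) * star V = (V * star V) * C * (V * star V) := by
        simp only [Matrix.mul_assoc]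
      rw [e1, h1, Matrix.one_mul, Matrix.mul_one]
    calc chart ρ σ = V * (star V * chart ρ σ * V) * star V := (key _).symm
      _ = V * (star V * chart ρ τ * V) * star V := by rw [hM]
      _ = chart ρ τ := key _
  have h3 : mlog σ + relEnt ρ σ • (1 : Matrix (Fin n) (Fin n) ℂ)
      = mlog τ + relEnt ρ τ • (1 : Matrix (Fin n) (Fin n) ℂ) := by
    have h0 := hchart
    rw [chart, chart] at h0
    have h2 := congrArg (fun M : Matrix (Fin n) (Fin n) ℂ => M + mlog ρ) h0
    abel_nf at h2 ⊢
    exact h2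
  set c : ℝ := relEnt ρ τ - relEnt ρ σ with hc
  have hlog : mlog σ = mlog τ + c • (1 : Matrix (Fin n) (Fin n) ℂ) := by
    rw [hc, sub_smul]
    have := eq_sub_of_add_eq h3
    rw [this]
    abel
  have hσt : σ = Real.exp c • τ := by
    rw [← mexp_mlog hσ, hlog]
    exact mexp_mlog_add_const hτ c
  have htr : (Real.exp c : ℂ) = 1 := by
    have h4 := congrArg Matrix.trace hσt
    rw [hσ1, Matrix.trace_smul, hτ1] at h4
    simpa [Complex.real_smul] using h4.symm
  have hc1 : Real.exp c = 1 := by exact_mod_cast htr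
  rw [hσt, hc1, one_smul]
end

section
/- Let ρ, τ, η be non-degenerate density matrices and let t ↦ τ_t be the exponential arc connecting τ to ρ. Then the real-valued function t ↦ D(η||τ_t) is differentiable at t = 0 with derivative −Tr η(log τ − log ρ) − D(ρ||τ). -/
open MeasureTheory
open scoped ComplexOrder

attribute [local instance] Matrix.frobeniusNormedAddCommGroup Matrix.frobeniusNormedSpace

variable {n : ℕ}

section Stmt10Aux

attribute [local instance] Matrix.frobeniusNormedRing Matrix.frobeniusNormedAlgebra

lemma exp_eq_cfc {A : Matrix (Fin n) (Fin n) ℂ} (hA : IsSelfAdjoint A) :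
    NormedSpace.exp A = cfc Real.exp A := by
  have hH : Matrix.IsHermitian A := hA
  rw [Matrix.IsHermitian.cfc_eq, Matrix.IsHermitian.cfc]
  have h1 : (Matrix.IsHermitian.eigenvectorUnitary hH : Matrix (Fin n) (Fin n) ℂ) *
      star (Matrix.IsHermitian.eigenvectorUnitary hH : Matrix (Fin n) (Fin n) ℂ) = 1 :=
    (Matrix.mem_unitaryGroup_iff).mp (Matrix.IsHermitian.eigenvectorUnitary hH).2
  have hstar : star (Matrix.IsHermitian.eigenvectorUnitary hH : Matrix (Fin n) (Fin n) ℂ)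
      = (Matrix.IsHermitian.eigenvectorUnitary hH : Matrix (Fin n) (Fin n) ℂ)⁻¹ :=
    (Matrix.inv_eq_right_inv h1).symm
  have hU : IsUnit (Matrix.IsHermitian.eigenvectorUnitary hH : Matrix (Fin n) (Fin n) ℂ) :=
    ⟨Unitary.toUnits (Matrix.IsHermitian.eigenvectorUnitary hH), rfl⟩
  have hconj : NormedSpace.exp ((Matrix.IsHermitian.eigenvectorUnitary hH : Matrix (Fin n) (Fin n) ℂ) *
        Matrix.diagonal (RCLike.ofReal ∘ hH.eigenvalues) *
        (Matrix.IsHermitian.eigenvectorUnitary hH : Matrix (Fin n) (Fin n) ℂ)⁻¹)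
      = (Matrix.IsHermitian.eigenvectorUnitary hH : Matrix (Fin n) (Fin n) ℂ) *
        NormedSpace.exp (Matrix.diagonal (RCLike.ofReal ∘ hH.eigenvalues)) *
        (Matrix.IsHermitian.eigenvectorUnitary hH : Matrix (Fin n) (Fin n) ℂ)⁻¹ :=
    Matrix.exp_conj _ _ hU
  have hdiag : NormedSpace.exp (Matrix.diagonal (RCLike.ofReal ∘ hH.eigenvalues))
      = Matrix.diagonal (NormedSpace.exp (RCLike.ofReal ∘ hH.eigenvalues)) :=
    Matrix.exp_diagonal (𝔸 := ℂ) _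
  have happ : ∀ (v : Fin n → ℂ) (i : Fin n), NormedSpace.exp v i = NormedSpace.exp (v i) := by
    intro v i
    rw [NormedSpace.exp_eq_tsum (𝕂 := ℂ), NormedSpace.exp_eq_tsum (𝕂 := ℂ)]
    simp only []
    rw [show (∑' (k : ℕ), ((k.factorial : ℂ))⁻¹ • v ^ k) i
        = ∑' (k : ℕ), (((k.factorial : ℂ))⁻¹ • v ^ k) i from
      tsum_apply (NormedSpace.expSeries_summable' (𝕂 := ℂ) v)]
    simp
  conv_lhs => rw [hH.spectral_theorem]
  simp only [Unitary.conjStarAlgAut_apply]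
  rw [hstar, hconj, hdiag]
  refine congrArg (· * _) (congrArg _ (congrArg _ (funext fun i => ?_)))
  rw [happ]
  simp [Function.comp, ← Complex.exp_eq_exp_ℂ, ← Complex.ofReal_exp]
  exact hH

lemma mlog_mexp {A : Matrix (Fin n) (Fin n) ℂ} (hA : IsSelfAdjoint A) :
    cfc Real.log (NormedSpace.exp A) = A := by
  rw [exp_eq_cfc hA, ← cfc_comp Real.log Real.exp A hA
    (Real.continuousOn_log.mono (by
      rintro - ⟨x, -, rfl⟩
      exact (Real.exp_pos x).ne' ))
    Real.continuous_exp.continuousOn]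
  rw [cfc_congr (f := Real.log ∘ Real.exp) (g := id) (fun x _ => Real.log_exp x)]
  exact cfc_id ℝ A

lemma mexp_mlog_s10 {A : Matrix (Fin n) (Fin n) ℂ} (hA : A.PosDef) :
    NormedSpace.exp (cfc Real.log A) = A := by
  have hsa : IsSelfAdjoint A := hA.1
  have hspec : ∀ x ∈ spectrum ℝ A, 0 < x := by
    intro x hx
    rw [Matrix.IsHermitian.spectrum_real_eq_range_eigenvalues hA.1] at hx
    obtain ⟨i, rfl⟩ := hx
    exact hA.eigenvalues_pos i
  rw [exp_eq_cfc (cfc_predicate Real.log A),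
    ← cfc_comp Real.exp Real.log A hsa Real.continuous_exp.continuousOn
      (Real.continuousOn_log.mono (fun x hx => (hspec x hx).ne'))]
  rw [cfc_congr (f := Real.exp ∘ Real.log) (g := id) (fun x hx => Real.exp_log (hspec x hx))]
  exact cfc_id ℝ A

set_option maxHeartbeats 1000000 in
lemma hasDerivAt_trace_exp (A B : Matrix (Fin n) (Fin n) ℂ) :
    HasDerivAt (fun t : ℝ => (NormedSpace.exp (A + t • B)).trace)
      ((NormedSpace.exp A * B).trace) 0 := by
  classical
  letI : TopologicalSpace (Matrix (Fin n) (Fin n) ℂ) :=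
    (inferInstance : PseudoMetricSpace (Matrix (Fin n) (Fin n) ℂ)).toUniformSpace.toTopologicalSpace
  letI : AddCommGroup (Matrix (Fin n) (Fin n) ℂ) := NormedAddCommGroup.toAddCommGroup
  letI : Module ℝ (Matrix (Fin n) (Fin n) ℂ) := NormedSpace.toModule
  let L : Matrix (Fin n) (Fin n) ℂ →L[ℝ] ℂ :=
    (LinearMap.toContinuousLinearMap (Matrix.traceLinearMap (Fin n) ℂ ℂ)).restrictScalars ℝ
  let X : ℝ → Matrix (Fin n) (Fin n) ℂ := fun t => A + t • B
  have hX : ∀ t : ℝ, HasDerivAt X B t := by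
    intro t
    have h := ((hasDerivAt_id t).smul_const B).const_add A
    simp only [id, one_smul] at h
    exact h
  have hpow : ∀ (k : ℕ) (t : ℝ), HasDerivAt (fun s => X s ^ k)
      (∑ i ∈ Finset.range k, X t ^ i * B * X t ^ (k - 1 - i)) t := by
    intro k
    induction k with
    | zero =>
      intro t
      simpa using hasDerivAt_const t (1 : Matrix (Fin n) (Fin n) ℂ)
    | succ k ih =>
      intro t
      have h := (ih t).mul (hX t)
      have hre : (∑ i ∈ Finset.range k, X t ^ i * B * X t ^ (k - 1 - i)) * X t + X t ^ k * B
          = ∑ i ∈ Finset.range (k + 1), X t ^ i * B * X t ^ (k + 1 - 1 - i) := by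
        rw [Finset.sum_mul, Finset.sum_range_succ]
        congr 1
        · apply Finset.sum_congr rfl
          intro i hi
          have hik : i < k := Finset.mem_range.mp hi
          rw [mul_assoc, ← pow_succ]
          congr 2
          omega
        · simp
      have h2 : HasDerivAt (fun s => X s ^ (k + 1))
          ((∑ i ∈ Finset.range k, X t ^ i * B * X t ^ (k - 1 - i)) * X t + X t ^ k * B) t := by
        simp only [pow_succ]
        exact h
      rw [← hre]
      exact h2
  let F : ℕ → ℝ → ℂ := fun k t => ((k.factorial : ℂ))⁻¹ • (X t ^ k).trace
  let G : ℕ → ℝ → ℂ := fun k t => ((k.factorial : ℂ))⁻¹ •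
      (∑ i ∈ Finset.range k, X t ^ i * B * X t ^ (k - 1 - i)).trace
  have hF : ∀ (k : ℕ) (t : ℝ), HasDerivAt (F k) (G k t) t := by
    intro k t
    exact (L.hasFDerivAt.comp_hasDerivAt t (hpow k t)).const_smul ((k.factorial : ℂ))⁻¹
  set c1 : ℝ := max 1 ‖(1 : Matrix (Fin n) (Fin n) ℂ)‖ with hc1def
  set R : ℝ := max 1 (‖A‖ + ‖B‖) with hRdef
  have hc1 : 1 ≤ c1 := le_max_left _ _
  have hR1 : 1 ≤ R := le_max_left _ _
  have hR0 : 0 ≤ R := le_trans zero_le_one hR1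
  have hXb : ∀ t ∈ Metric.ball (0:ℝ) 1, ‖X t‖ ≤ R := by
    intro t ht
    have ht1 : |t| ≤ 1 := le_of_lt (by simpa [Real.dist_eq] using Metric.mem_ball.mp ht)
    have hB0 : (0:ℝ) ≤ ‖B‖ := norm_nonneg B
    calc ‖A + t • B‖ ≤ ‖A‖ + ‖t • B‖ := norm_add_le _ _
      _ = ‖A‖ + |t| * ‖B‖ := by rw [norm_smul, Real.norm_eq_abs]
      _ ≤ ‖A‖ + 1 * ‖B‖ := by nlinarith
      _ ≤ R := by rw [one_mul]; exact le_max_right _ _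
  have hpowb : ∀ (m : ℕ) (Y : Matrix (Fin n) (Fin n) ℂ), ‖Y‖ ≤ R → ‖Y ^ m‖ ≤ c1 * R ^ m := by
    intro m Y hY
    cases m with
    | zero =>
      rw [pow_zero, pow_zero, mul_one]
      exact le_max_right _ _
    | succ m =>
      calc ‖Y ^ (m+1)‖ ≤ ‖Y‖ ^ (m+1) := norm_pow_le' Y (Nat.succ_pos m)
        _ ≤ R ^ (m+1) := pow_le_pow_left₀ (norm_nonneg Y) hY _
        _ ≤ c1 * R ^ (m+1) := le_mul_of_one_le_left (pow_nonneg hR0 _) hc1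
  set Cb : ℝ := ‖L‖ * (c1 * c1 * ‖B‖) with hCbdef
  have hCb0 : 0 ≤ Cb := by positivity
  let u : ℕ → ℝ := fun k => Nat.rec 0 (fun m _ => Cb * (R ^ m / m.factorial)) k
  have hu : Summable u := by
    rw [← summable_nat_add_iff 1]
    simpa using (Real.summable_pow_div_factorial R).mul_left Cb
  have hbound : ∀ (k : ℕ) (t : ℝ), t ∈ Metric.ball (0:ℝ) 1 → ‖G k t‖ ≤ u k := by
    intro k t ht
    cases k with
    | zero => simp [G, u]
    | succ m =>
      have hXt := hXb t ht
      have hterm : ∀ i ∈ Finset.range (m+1),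
          ‖X t ^ i * B * X t ^ (m - i)‖ ≤ c1 * c1 * ‖B‖ * R ^ m := by
        intro i hi
        have him : i ≤ m := by
          have := Finset.mem_range.mp hi; omega
        calc ‖X t ^ i * B * X t ^ (m - i)‖
            ≤ ‖X t ^ i * B‖ * ‖X t ^ (m - i)‖ := norm_mul_le _ _
          _ ≤ ‖X t ^ i‖ * ‖B‖ * ‖X t ^ (m - i)‖ :=
              mul_le_mul_of_nonneg_right (norm_mul_le _ _) (norm_nonneg _)
          _ ≤ (c1 * R ^ i) * ‖B‖ * (c1 * R ^ (m - i)) := by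
              have h1 := hpowb i (X t) hXt
              have h2 := hpowb (m - i) (X t) hXt
              have hB0 : (0:ℝ) ≤ ‖B‖ := norm_nonneg _
              exact mul_le_mul (mul_le_mul h1 le_rfl hB0 (by positivity)) h2
                (norm_nonneg _) (by positivity)
          _ = c1 * c1 * ‖B‖ * (R ^ i * R ^ (m - i)) := by ring
          _ = c1 * c1 * ‖B‖ * R ^ m := by
              rw [← pow_add]
              congr 2
              omega
      have hS : ‖(∑ i ∈ Finset.range (m+1), X t ^ i * B * X t ^ (m - i))‖
          ≤ (m+1) * (c1 * c1 * ‖B‖ * R ^ m) := by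
        calc ‖(∑ i ∈ Finset.range (m+1), X t ^ i * B * X t ^ (m - i))‖
            ≤ ∑ i ∈ Finset.range (m+1), ‖X t ^ i * B * X t ^ (m - i)‖ := norm_sum_le _ _
          _ ≤ ∑ i ∈ Finset.range (m+1), c1 * c1 * ‖B‖ * R ^ m := Finset.sum_le_sum hterm
          _ = (m+1) * (c1 * c1 * ‖B‖ * R ^ m) := by
              rw [Finset.sum_const, Finset.card_range]
              push_cast
              ring
      have hGnorm : ‖G (m+1) t‖ = (((m+1).factorial : ℝ))⁻¹ *
          ‖(∑ i ∈ Finset.range (m+1), X t ^ i * B * X t ^ ((m+1) - 1 - i)).trace‖ := by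
        rw [show G (m+1) t = (((m+1).factorial : ℂ))⁻¹ •
          (∑ i ∈ Finset.range (m+1), X t ^ i * B * X t ^ ((m+1) - 1 - i)).trace from rfl,
          norm_smul, norm_inv, Complex.norm_natCast]
      have htrb : ‖(∑ i ∈ Finset.range (m+1), X t ^ i * B * X t ^ ((m+1) - 1 - i)).trace‖
          ≤ ‖L‖ * ((m+1) * (c1 * c1 * ‖B‖ * R ^ m)) := by
        have hLle := L.le_opNorm (∑ i ∈ Finset.range (m+1), X t ^ i * B * X t ^ ((m+1) - 1 - i))
        have heq : ((m+1 : ℕ)) - 1 = m := by omega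
        simp only [heq] at hLle ⊢
        have : L (∑ i ∈ Finset.range (m+1), X t ^ i * B * X t ^ (m - i))
            = (∑ i ∈ Finset.range (m+1), X t ^ i * B * X t ^ (m - i)).trace := rfl
        rw [this] at hLle
        have hL0 : (0:ℝ) ≤ ‖L‖ := norm_nonneg _
        nlinarith
      rw [hGnorm]
      have hufact : u (m+1) = Cb * (R ^ m / m.factorial) := rfl
      rw [hufact, hCbdef]
      have hfpos : (0:ℝ) < ((m+1).factorial : ℝ) := by positivity
      rw [Nat.factorial_succ]
      push_cast
      have hmf : (0:ℝ) < (m.factorial : ℝ) := by positivity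
      have h := htrb
      have heq : ((m:ℝ) + 1) * (m.factorial : ℝ) > 0 := by positivity
      rw [div_eq_mul_inv]
      calc ((((m:ℝ) + 1) * (m.factorial : ℝ)))⁻¹ *
            ‖(∑ i ∈ Finset.range (m+1), X t ^ i * B * X t ^ ((m+1) - 1 - i)).trace‖
          ≤ ((((m:ℝ) + 1) * (m.factorial : ℝ)))⁻¹ * (‖L‖ * (((m:ℝ)+1) * (c1 * c1 * ‖B‖ * R ^ m))) := by
            have hinv : (0:ℝ) ≤ ((((m:ℝ) + 1) * (m.factorial : ℝ)))⁻¹ := by positivity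
            push_cast at htrb
            nlinarith
        _ = ‖L‖ * (c1 * c1 * ‖B‖) * (R ^ m * ((m.factorial : ℝ))⁻¹) := by
            field_simp
  have hsumF : ∀ t : ℝ, HasSum (fun k => F k t) ((NormedSpace.exp (X t)).trace) := by
    intro t
    have h := NormedSpace.exp_series_hasSum_exp' (𝕂 := ℂ) (X t)
    have h2 := h.mapL L
    have heq : (fun k : ℕ => L (((k.factorial : ℂ))⁻¹ • X t ^ k)) = fun k => F k t := by
      funext k
      show ((((k.factorial : ℂ))⁻¹ • X t ^ k)).trace = ((k.factorial : ℂ))⁻¹ • (X t ^ k).trace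
      rw [Matrix.trace_smul]
    rw [heq] at h2
    exact h2
  have hunif : TendstoUniformlyOn (fun N t => ∑ k ∈ Finset.range N, G k t)
      (fun t => ∑' k, G k t) Filter.atTop (Metric.ball (0:ℝ) 1) :=
    tendstoUniformlyOn_tsum_nat hu hbound
  have hmain : HasDerivAt (fun t => (NormedSpace.exp (X t)).trace) (∑' k, G k 0) 0 := by
    refine hasDerivAt_of_tendstoUniformlyOn Metric.isOpen_ball hunif
      (Filter.Eventually.of_forall (fun N t ht => HasDerivAt.sum (fun k _ => hF k t)))
      (fun t _ => by simpa only [Finset.sum_apply] using (hsumF t).tendsto_sum_nat) (Metric.mem_ball_self one_pos)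
  have hX0 : X 0 = A := by simp [X]
  have hG0 : ∀ m : ℕ, G (m+1) 0 = ((m.factorial : ℂ))⁻¹ • (A ^ m * B).trace := by
    intro m
    have hterm : ∀ i ∈ Finset.range (m+1),
        (X 0 ^ i * B * X 0 ^ ((m+1) - 1 - i)).trace = (A ^ m * B).trace := by
      intro i hi
      have him : i ≤ m := by have := Finset.mem_range.mp hi; omega
      rw [hX0]
      have heq : (m+1) - 1 - i = m - i := by omega
      rw [heq, Matrix.trace_mul_comm (A ^ i * B) (A ^ (m - i)), ← mul_assoc, ← pow_add,
        Nat.sub_add_cancel him]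
    have htr : (∑ i ∈ Finset.range (m+1), X 0 ^ i * B * X 0 ^ ((m+1) - 1 - i)).trace
        = (((m+1:ℕ)) : ℂ) * (A ^ m * B).trace := by
      rw [Matrix.trace_sum, Finset.sum_congr rfl hterm, Finset.sum_const, Finset.card_range,
        nsmul_eq_mul]
    show ((((m+1).factorial : ℂ))⁻¹ •
        (∑ i ∈ Finset.range (m+1), X 0 ^ i * B * X 0 ^ ((m+1) - 1 - i)).trace) = _
    rw [htr, Nat.factorial_succ, smul_eq_mul, smul_eq_mul, Nat.cast_mul, mul_inv,
      mul_assoc, ← mul_assoc (((m.factorial:ℕ):ℂ))⁻¹, mul_comm (((m.factorial:ℕ):ℂ))⁻¹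
        ((((m+1:ℕ)):ℂ)), ← mul_assoc, ← mul_assoc, inv_mul_cancel₀
        (Nat.cast_ne_zero.mpr (Nat.succ_ne_zero m)), one_mul]
  have hGsummable : Summable (fun k => G k 0) :=
    Summable.of_norm_bounded hu (fun k => hbound k 0 (Metric.mem_ball_self one_pos))
  have htsum : (∑' k, G k 0) = (NormedSpace.exp A * B).trace := by
    rw [Summable.tsum_eq_zero_add hGsummable]
    have hG00 : G 0 0 = 0 := by simp [G]
    rw [hG00, zero_add, tsum_congr hG0]
    let L2 : Matrix (Fin n) (Fin n) ℂ →L[ℝ] ℂ :=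
      L.comp ((LinearMap.toContinuousLinearMap (LinearMap.mulRight ℂ B)).restrictScalars ℝ)
    have h := NormedSpace.exp_series_hasSum_exp' (𝕂 := ℂ) A
    have h2 := h.mapL L2
    have heq : (fun m : ℕ => L2 (((m.factorial : ℂ))⁻¹ • A ^ m))
        = fun m => ((m.factorial : ℂ))⁻¹ • (A ^ m * B).trace := by
      funext m
      show ((((m.factorial : ℂ))⁻¹ • A ^ m) * B).trace = _
      rw [smul_mul_assoc, Matrix.trace_smul]
    rw [heq] at h2
    exact h2.tsum_eq
  rw [htsum] at hmain
  exact hmain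

end Stmt10Aux

set_option maxHeartbeats 1600000

/-- along the exponential arc `τ_t` connecting `τ` to `ρ`, the function
`t ↦ D(η‖τ_t)` is differentiable at `t = 0` with derivative
`-Tr η(log τ - log ρ) - D(ρ‖τ)`. -/
theorem stmt10 (n : ℕ) (hn : 1 ≤ n) (ρ τ η : Matrix (Fin n) (Fin n) ℂ)
    (hρ : ρ.PosDef) (hρ1 : ρ.trace = 1) (hτ : τ.PosDef) (hτ1 : τ.trace = 1)
    (hη : η.PosDef) (hη1 : η.trace = 1) :
    HasDerivAt (fun t : ℝ => relEnt η (arc ρ τ t))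
      (-(Matrix.trace (η * (mlog τ - mlog ρ))).re - relEnt ρ τ) 0 := by
  have hsLρ : IsSelfAdjoint (mlog ρ) := cfc_predicate Real.log ρ
  have hsLτ : IsSelfAdjoint (mlog τ) := cfc_predicate Real.log τ
  have hH : ∀ t : ℝ, IsSelfAdjoint
      ((1 - t) • mlog ρ + t • mlog τ - alpha ρ τ t • (1 : Matrix (Fin n) (Fin n) ℂ)) := by
    intro t
    have hs1 : IsSelfAdjoint ((1 - t) • mlog ρ) :=
      IsSelfAdjoint.smul (star_trivial (1 - t)) hsLρ
    have hs2 : IsSelfAdjoint (t • mlog τ) :=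
      IsSelfAdjoint.smul (star_trivial t) hsLτ
    have hs3 : IsSelfAdjoint (alpha ρ τ t • (1 : Matrix (Fin n) (Fin n) ℂ)) :=
      IsSelfAdjoint.smul (star_trivial (alpha ρ τ t))
        (IsSelfAdjoint.one (Matrix (Fin n) (Fin n) ℂ))
    exact (hs1.add hs2).sub hs3
  have hmlogarc : ∀ t : ℝ, mlog (arc ρ τ t)
      = (1 - t) • mlog ρ + t • mlog τ - alpha ρ τ t • (1 : Matrix (Fin n) (Fin n) ℂ) := by
    intro t
    exact mlog_mexp (hH t)
  set a : ℝ := (Matrix.trace (η * mlog ρ)).re with ha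
  set b : ℝ := (Matrix.trace (η * mlog τ)).re with hb
  set c0 : ℝ := (Matrix.trace (η * mlog η)).re with hc0
  have hfun : ∀ t : ℝ, relEnt η (arc ρ τ t)
      = c0 - ((1 - t) * a + t * b - alpha ρ τ t) := by
    intro t
    rw [relEnt, hmlogarc t, mul_sub, Matrix.trace_sub, Complex.sub_re]
    congr 1
    rw [mul_sub, mul_add, mul_smul_comm, mul_smul_comm, mul_smul_comm, mul_one,
      Matrix.trace_sub, Matrix.trace_add, Matrix.trace_smul, Matrix.trace_smul,
      Matrix.trace_smul, hη1]
    simp [Complex.smul_re, Complex.sub_re, Complex.add_re, ← ha, ← hb]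
  set B : Matrix (Fin n) (Fin n) ℂ := mlog τ - mlog ρ with hB
  have halpha_eq : ∀ t : ℝ, alpha ρ τ t
      = Real.log (Matrix.trace (NormedSpace.exp (mlog ρ + t • B))).re := by
    intro t
    have hM : (1 - t) • mlog ρ + t • mlog τ = mlog ρ + t • B := by
      rw [hB, smul_sub, sub_smul, one_smul]
      abel
    rw [alpha, hM]
    rfl
  have hg : HasDerivAt (fun t : ℝ => (Matrix.trace (NormedSpace.exp (mlog ρ + t • B))).re)
      ((Matrix.trace (NormedSpace.exp (mlog ρ) * B)).re) 0 :=
    Complex.reCLM.hasFDerivAt.comp_hasDerivAt 0 (hasDerivAt_trace_exp (mlog ρ) B)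
  have hexpρ : NormedSpace.exp (mlog ρ) = ρ := mexp_mlog_s10 hρ
  have hg0 : (Matrix.trace (NormedSpace.exp (mlog ρ + (0:ℝ) • B))).re = 1 := by
    rw [zero_smul, add_zero, hexpρ, hρ1, Complex.one_re]
  have hgval : (Matrix.trace (NormedSpace.exp (mlog ρ) * B)).re = - relEnt ρ τ := by
    rw [hexpρ, hB, relEnt, mul_sub, mul_sub, Matrix.trace_sub, Matrix.trace_sub,
      Complex.sub_re, Complex.sub_re]
    ring
  have halpha : HasDerivAt (fun t : ℝ => alpha ρ τ t) (- relEnt ρ τ) 0 := by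
    have hlog := Real.hasDerivAt_log
      (x := (Matrix.trace (NormedSpace.exp (mlog ρ + (0:ℝ) • B))).re) (by rw [hg0]; norm_num)
    have hcomp := hlog.comp 0 hg
    have hfe2 : (fun t : ℝ => alpha ρ τ t)
        = Real.log ∘ (fun t : ℝ => (Matrix.trace (NormedSpace.exp (mlog ρ + t • B))).re) := by
      funext t; exact halpha_eq t
    rw [hfe2]
    refine hcomp.congr_deriv ?_
    rw [hg0, hgval]
    norm_num
  have h1 : HasDerivAt (fun t : ℝ => (1 - t) * a) (-a) 0 := by
    simpa using ((hasDerivAt_id (0:ℝ)).const_sub 1).mul_const a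
  have h2 : HasDerivAt (fun t : ℝ => t * b) b 0 := by
    simpa using (hasDerivAt_id (0:ℝ)).mul_const b
  have hfinal := (hasDerivAt_const (0:ℝ) c0).sub ((h1.add h2).sub halpha)
  have hfe : (fun t : ℝ => relEnt η (arc ρ τ t))
      = fun t : ℝ => c0 - ((1 - t) * a + t * b - alpha ρ τ t) := funext hfun
  rw [hfe]
  refine hfinal.congr_deriv ?_
  rw [mul_sub, Matrix.trace_sub, Complex.sub_re, ← ha, ← hb]
  ring
end

section
/- Let ρ be a positive definite n×n complex matrix and C a Hermitian n×n matrix. Then the Bogoliubov form ∫₀¹ Tr( ρ^u C ρ^{1−u} C ) du is a nonnegative real number, and it equals 0 if and only if C = 0. -/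
open MeasureTheory
open scoped ComplexOrder

attribute [local instance] Matrix.frobeniusNormedAddCommGroup Matrix.frobeniusNormedSpace

variable {n : ℕ}

private lemma rpow_cont {a : ℝ} (ha : 0 < a) : Continuous (fun u : ℝ => a ^ u) := by
  have : (fun u : ℝ => a ^ u) = fun u => Real.exp (Real.log a * u) := by
    funext u; rw [Real.rpow_def_of_pos ha]
  rw [this]; fun_prop


/-- the Bogoliubov form `∫₀¹ Tr(ρ^u C ρ^(1-u) C) du` of a Hermitian matrix
`C` is a nonnegative real number, vanishing iff `C = 0`. -/
theorem stmt12 (n : ℕ) (hn : 1 ≤ n) (ρ : Matrix (Fin n) (Fin n) ℂ) (hρ : ρ.PosDef)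
    (C : Matrix (Fin n) (Fin n) ℂ) (hC : C.IsHermitian) :
    (∫ u in (0:ℝ)..1, Matrix.trace (mpow ρ u * C * mpow ρ (1 - u) * C)).im = 0 ∧
    0 ≤ (∫ u in (0:ℝ)..1, Matrix.trace (mpow ρ u * C * mpow ρ (1 - u) * C)).re ∧
    ((∫ u in (0:ℝ)..1, Matrix.trace (mpow ρ u * C * mpow ρ (1 - u) * C)) = 0 ↔ C = 0) := by
  classical
  have hH := hρ.1
  set U : Matrix (Fin n) (Fin n) ℂ := (hH.eigenvectorUnitary : Matrix (Fin n) (Fin n) ℂ) with hUdef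
  set lam : Fin n → ℝ := hH.eigenvalues with hlamdef
  have hlampos : ∀ i, 0 < lam i := hρ.eigenvalues_pos
  have hsU : star U * U = 1 := by simp [hUdef]
  have hUs : U * star U = 1 := by simp [hUdef]
  set C' : Matrix (Fin n) (Fin n) ℂ := star U * C * U with hC'def
  have hC'h : star C' = C' := by
    rw [hC'def, star_mul, star_mul, star_star]
    rw [show star C = C from hC]
    rw [Matrix.mul_assoc]
  have hC'entry : ∀ i j, C' j i = (starRingEnd ℂ) (C' i j) := by
    intro i j
    conv_lhs => rw [← hC'h]
    rw [Matrix.star_eq_conjTranspose, Matrix.conjTranspose_apply]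
    rfl
  have hmp : ∀ u : ℝ, mpow ρ u =
      U * Matrix.diagonal (fun i => (((lam i : ℝ) ^ u : ℝ) : ℂ)) * star U := by
    intro u
    unfold mpow
    rw [hH.cfc_eq, Matrix.IsHermitian.cfc]
    rfl
  set g : ℝ → ℝ :=
    fun u => ∑ i, ∑ j, lam i ^ u * lam j ^ (1 - u) * Complex.normSq (C' i j) with hgdef
  have htr : ∀ u : ℝ, Matrix.trace (mpow ρ u * C * mpow ρ (1 - u) * C) = ((g u : ℝ) : ℂ) := by
    intro u
    rw [hmp u, hmp (1 - u)]
    have h1 : (U * Matrix.diagonal (fun i => (((lam i : ℝ) ^ u : ℝ) : ℂ)) * star U) * C *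
        (U * Matrix.diagonal (fun i => (((lam i : ℝ) ^ (1 - u) : ℝ) : ℂ)) * star U) * C
        = U * (Matrix.diagonal (fun i => (((lam i : ℝ) ^ u : ℝ) : ℂ)) * C' *
            Matrix.diagonal (fun i => (((lam i : ℝ) ^ (1 - u) : ℝ) : ℂ)) * C') * star U := by
      simp only [hC'def, Matrix.mul_assoc, hUs, Matrix.mul_one]
    rw [h1, Matrix.trace_mul_comm, ← Matrix.mul_assoc, hsU, Matrix.one_mul]
    rw [Matrix.trace]
    simp only [Matrix.diag_apply, Matrix.mul_apply, Matrix.diagonal_apply, mul_ite, ite_mul,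
      zero_mul, mul_zero, Finset.sum_ite_eq, Finset.sum_ite_eq', Finset.mem_univ, if_true]
    rw [hgdef]
    push_cast
    refine Finset.sum_congr rfl fun i _ => Finset.sum_congr rfl fun j _ => ?_
    rw [hC'entry i j]
    linear_combination (((lam i : ℝ) ^ u : ℝ) : ℂ) * (((lam j : ℝ) ^ (1 - u) : ℝ) : ℂ) *
      Complex.mul_conj (C' i j)
  have hterm : ∀ i j : Fin n, Continuous fun u : ℝ => lam i ^ u * lam j ^ (1 - u) := fun i j =>
    (rpow_cont (hlampos i)).mul ((rpow_cont (hlampos j)).comp (continuous_const.sub continuous_id))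
  have hInt1 : ∀ i j : Fin n, IntervalIntegrable
      (fun u => lam i ^ u * lam j ^ (1 - u) * Complex.normSq (C' i j)) volume 0 1 :=
    fun i j => ((hterm i j).mul continuous_const).intervalIntegrable _ _
  have hInt2 : ∀ i : Fin n, IntervalIntegrable
      (fun u => ∑ j, lam i ^ u * lam j ^ (1 - u) * Complex.normSq (C' i j)) volume 0 1 :=
    fun i => (continuous_finset_sum _ fun j _ => (hterm i j).mul continuous_const).intervalIntegrable _ _
  have hint : (∫ u in (0:ℝ)..1, Matrix.trace (mpow ρ u * C * mpow ρ (1 - u) * C))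
      = ((∫ u in (0:ℝ)..1, g u : ℝ) : ℂ) := by
    simp only [htr]
    exact intervalIntegral.integral_ofReal
  have hgsplit : (∫ u in (0:ℝ)..1, g u)
      = ∑ i, ∑ j, Complex.normSq (C' i j) * ∫ u in (0:ℝ)..1, lam i ^ u * lam j ^ (1 - u) := by
    simp only [hgdef]
    rw [intervalIntegral.integral_finset_sum (fun i _ => hInt2 i)]
    refine Finset.sum_congr rfl fun i _ => ?_
    rw [intervalIntegral.integral_finset_sum (fun j _ => hInt1 i j)]
    refine Finset.sum_congr rfl fun j _ => ?_
    rw [intervalIntegral.integral_mul_const, mul_comm]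
  have hIpos : ∀ i j : Fin n, 0 < ∫ u in (0:ℝ)..1, lam i ^ u * lam j ^ (1 - u) := fun i j =>
    intervalIntegral.intervalIntegral_pos_of_pos ((hterm i j).intervalIntegrable _ _)
      (fun u => mul_pos (Real.rpow_pos_of_pos (hlampos i) _) (Real.rpow_pos_of_pos (hlampos j) _))
      one_pos
  have hnn2 : ∀ i : Fin n, 0 ≤ ∑ j, Complex.normSq (C' i j) * ∫ u in (0:ℝ)..1, lam i ^ u * lam j ^ (1 - u) :=
    fun i => Finset.sum_nonneg fun j _ => mul_nonneg (Complex.normSq_nonneg _) (hIpos i j).le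
  have hgnn : 0 ≤ ∫ u in (0:ℝ)..1, g u := by
    rw [hgsplit]
    exact Finset.sum_nonneg fun i _ => hnn2 i
  refine ⟨by rw [hint]; exact Complex.ofReal_im _, by rw [hint]; simpa using hgnn, ?_⟩
  constructor
  · intro h0
    rw [hint, Complex.ofReal_eq_zero, hgsplit] at h0
    have hz := (Finset.sum_eq_zero_iff_of_nonneg (fun i _ => hnn2 i)).mp h0
    have hCz : C' = 0 := by
      ext i j
      have h2 := (Finset.sum_eq_zero_iff_of_nonneg
        (fun j _ => mul_nonneg (Complex.normSq_nonneg _) (hIpos i j).le)).mp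
        (hz i (Finset.mem_univ i)) j (Finset.mem_univ j)
      have h3 : Complex.normSq (C' i j) = 0 := by
        rcases mul_eq_zero.mp h2 with h | h
        · exact h
        · exact absurd h (hIpos i j).ne'
      simpa [Complex.normSq_eq_zero] using h3
    have hCrec : C = U * C' * star U := by
      rw [hC'def]
      calc C = (U * star U) * C * (U * star U) := by rw [hUs, Matrix.one_mul, Matrix.mul_one]
        _ = U * (star U * C * U) * star U := by noncomm_ring
    rw [hCrec, hCz, Matrix.mul_zero, Matrix.zero_mul]
  · rintro rfl
    simp
end

section
/- Let ρ be a non-degenerate density matrix and A a Hermitian n×n matrix with Tr ρA = 0, and define Φ_ρ(A) = log Tr exp(log ρ + A) and τ_A = exp(log ρ + A) / Tr exp(log ρ + A). Then c_ρ(τ_A) = A and Φ_ρ(A) = D(ρ||τ_A). -/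
open MeasureTheory
open scoped ComplexOrder

attribute [local instance] Matrix.frobeniusNormedAddCommGroup Matrix.frobeniusNormedSpace

variable {n : ℕ}

lemma mexp_eq_cfc {B : Matrix (Fin n) (Fin n) ℂ} (hB : B.IsHermitian) :
    mexp B = cfc Real.exp B := by
  letI : NormedRing (Matrix (Fin n) (Fin n) ℂ) := Matrix.linftyOpNormedRing
  letI : NormedAlgebra ℝ (Matrix (Fin n) (Fin n) ℂ) := Matrix.linftyOpNormedAlgebra
  exact (@CFC.real_exp_eq_normedSpace_exp _ Matrix.linftyOpNormedRing _ Matrix.linftyOpNormedAlgebra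
    Matrix.IsHermitian.instContinuousFunctionalCalculus B hB).symm

lemma trace_cfc' {B : Matrix (Fin n) (Fin n) ℂ} (hB : B.IsHermitian) (f : ℝ → ℝ) :
    (cfc f B).trace = ↑(∑ i, f (hB.eigenvalues i)) := by
  rw [hB.cfc_eq, Matrix.IsHermitian.cfc, Unitary.conjStarAlgAut_apply, Matrix.trace_mul_cycle,
    Unitary.star_mul_self_of_mem (SetLike.coe_mem _), one_mul, Matrix.trace_diagonal]
  push_cast
  rfl

lemma coe_smul_mat (r : ℝ) (M : Matrix (Fin n) (Fin n) ℂ) : (↑r : ℂ) • M = r • M := by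
  ext i j; simp [Complex.real_smul]

/-- for Hermitian `A` with `Tr ρA = 0` one has `c_ρ(τ_A) = A` and
`Φ_ρ(A) = D(ρ‖τ_A)`. -/
theorem stmt14 (n : ℕ) (hn : 1 ≤ n) (ρ : Matrix (Fin n) (Fin n) ℂ)
    (hρ : ρ.PosDef) (hρ1 : ρ.trace = 1)
    (A : Matrix (Fin n) (Fin n) ℂ) (hA : A.IsHermitian) (hAtr : (ρ * A).trace = 0) :
    chart ρ (tauOf ρ A) = A ∧ potential ρ A = relEnt ρ (tauOf ρ A) := by
  have hL : (mlog ρ).IsHermitian := cfc_predicate Real.log ρ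
  have hB : (mlog ρ + A).IsHermitian := hL.add hA
  set B := mlog ρ + A with hBdef
  set r : ℝ := ∑ i, Real.exp (hB.eigenvalues i) with hrdef
  have hne : Nonempty (Fin n) := ⟨⟨0, by omega⟩⟩
  have hr : 0 < r := Finset.sum_pos (fun i _ => Real.exp_pos _) Finset.univ_nonempty
  have htr : (mexp B).trace = (r : ℂ) := by
    rw [mexp_eq_cfc hB, trace_cfc' hB]
  have htau : tauOf ρ A = cfc (fun x => r⁻¹ • Real.exp x) B := by
    rw [tauOf, ← hBdef, htr, mexp_eq_cfc hB, ← Complex.ofReal_inv, coe_smul_mat,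
      cfc_smul r⁻¹ Real.exp B]
  have hlogtau : mlog (tauOf ρ A) = B - Real.log r • (1 : Matrix (Fin n) (Fin n) ℂ) := by
    rw [htau, mlog, ← cfc_comp' Real.log (fun x => r⁻¹ • Real.exp x) B
      ((Matrix.finite_real_spectrum.image _).continuousOn Real.log)
      (Continuous.continuousOn (by fun_prop))]
    have : (fun x => Real.log (r⁻¹ • Real.exp x)) = fun x => x - Real.log r := by
      funext x
      rw [smul_eq_mul, Real.log_mul (by positivity) (Real.exp_pos x).ne',
        Real.log_inv, Real.log_exp]
      ring
    rw [this, cfc_sub _ _ B (Continuous.continuousOn (by fun_prop))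
      (Continuous.continuousOn (by fun_prop)), cfc_id' ℝ B, cfc_const _ B,
      Algebra.algebraMap_eq_smul_one]
  have hrel : relEnt ρ (tauOf ρ A) = Real.log r := by
    rw [relEnt, hlogtau]
    have : mlog ρ - (B - Real.log r • (1 : Matrix (Fin n) (Fin n) ℂ))
        = Real.log r • (1 : Matrix (Fin n) (Fin n) ℂ) - A := by
      rw [hBdef]; abel
    rw [this, Matrix.mul_sub, Matrix.trace_sub, hAtr, sub_zero,
      Matrix.mul_smul, Matrix.mul_one, Matrix.trace_smul, hρ1]
    simp
  refine ⟨?_, ?_⟩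
  · rw [chart, hrel, hlogtau, hBdef]
    abel
  · rw [potential, ← hBdef, htr, hrel, Complex.ofReal_re]
end

section
/- Let ρ be a non-degenerate density matrix and A, B Hermitian n×n matrices, and define Φ_ρ(A) = log Tr exp(log ρ + A) and τ_A = exp(log ρ + A) / Tr exp(log ρ + A). Then Φ_ρ(B) ≥ Φ_ρ(A) + Tr( τ_A (B − A) ), i.e. the affine map B ↦ Φ_ρ(A) + Tr τ_A(B − A) is a supporting plane of the potential Φ_ρ touching it at A. -/
open MeasureTheory
open scoped ComplexOrder

attribute [local instance] Matrix.frobeniusNormedAddCommGroup Matrix.frobeniusNormedSpace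

variable {n : ℕ}

section AuxPB

lemma unitary_inv_eq_star (U : Matrix (Fin n) (Fin n) ℂ) (hU : U ∈ Matrix.unitaryGroup (Fin n) ℂ) :
    U⁻¹ = star U :=
  Matrix.inv_eq_left_inv ((Matrix.mem_unitaryGroup_iff').mp hU)

lemma mexp_hermitian (H : Matrix (Fin n) (Fin n) ℂ) (hH : H.IsHermitian) :
    mexp H = (hH.eigenvectorUnitary : Matrix (Fin n) (Fin n) ℂ) *
      Matrix.diagonal (fun i => (Real.exp (hH.eigenvalues i) : ℂ)) *
      star (hH.eigenvectorUnitary : Matrix (Fin n) (Fin n) ℂ) := by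
  set U : Matrix (Fin n) (Fin n) ℂ := (hH.eigenvectorUnitary : Matrix (Fin n) (Fin n) ℂ)
  have hUu : IsUnit U :=
    isUnit_iff_exists.mpr ⟨star U, Matrix.mem_unitaryGroup_iff.mp hH.eigenvectorUnitary.2,
      Matrix.mem_unitaryGroup_iff'.mp hH.eigenvectorUnitary.2⟩
  have hsU : U⁻¹ = star U := unitary_inv_eq_star U hH.eigenvectorUnitary.2
  have hdiag : NormedSpace.exp (Matrix.diagonal (Complex.ofReal ∘ hH.eigenvalues))
      = Matrix.diagonal (fun i => (Real.exp (hH.eigenvalues i) : ℂ)) := by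
    rw [Matrix.exp_diagonal, Pi.exp_def, ← Complex.exp_eq_exp_ℂ]
    simp [Function.comp_def, Complex.ofReal_exp]
  calc mexp H = mexp (U * Matrix.diagonal (Complex.ofReal ∘ hH.eigenvalues) * U⁻¹) := by
        rw [hsU]; exact congrArg mexp hH.spectral_theorem
    _ = U * NormedSpace.exp (Matrix.diagonal (Complex.ofReal ∘ hH.eigenvalues)) * U⁻¹ := by
        rw [mexp, Matrix.exp_conj _ _ hUu]
    _ = _ := by rw [hdiag, hsU]

lemma trace_conj_unitary (U : Matrix (Fin n) (Fin n) ℂ)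
    (hU : U ∈ Matrix.unitaryGroup (Fin n) ℂ) (X : Matrix (Fin n) (Fin n) ℂ) :
    Matrix.trace (U * X * star U) = Matrix.trace X := by
  rw [Matrix.trace_mul_cycle, Matrix.mem_unitaryGroup_iff'.mp hU, one_mul]

lemma trace_mexp (H : Matrix (Fin n) (Fin n) ℂ) (hH : H.IsHermitian) :
    Matrix.trace (mexp H) = ((∑ i, Real.exp (hH.eigenvalues i) : ℝ) : ℂ) := by
  rw [mexp_hermitian H hH, trace_conj_unitary _ hH.eigenvectorUnitary.2,
    Matrix.trace_diagonal]
  push_cast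
  rfl

-- Peierls inequality
lemma peierls (N : Matrix (Fin n) (Fin n) ℂ) (hN : N.IsHermitian) :
    ∑ i, Real.exp ((N i i).re) ≤ (Matrix.trace (mexp N)).re := by
  set W : Matrix (Fin n) (Fin n) ℂ := (hN.eigenvectorUnitary : Matrix (Fin n) (Fin n) ℂ)
  set μ : Fin n → ℝ := hN.eigenvalues
  have hdiagN : ∀ i, (N i i).re = ∑ j, Complex.normSq (W i j) * μ j := by
    intro i
    have hNe : N i i = ∑ j, ((Complex.normSq (W i j) * μ j : ℝ) : ℂ) := by
      conv_lhs => rw [show N = W * Matrix.diagonal (RCLike.ofReal ∘ hN.eigenvalues) * star W from hN.spectral_theorem]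
      rw [Matrix.mul_apply]
      refine Finset.sum_congr rfl fun j _ => ?_
      rw [Matrix.mul_apply, Finset.sum_eq_single j ?_ (by simp)]
      · simp only [Matrix.diagonal_apply_eq, Function.comp_apply, Matrix.star_apply]
        rw [RCLike.star_def, mul_right_comm, Complex.mul_conj]
        push_cast
        rfl
      · intro b _ hbj
        simp [Matrix.diagonal_apply_ne _ hbj]
    rw [hNe]
    push_cast [Complex.re_sum]
    simp
  have hrow : ∀ i, ∑ j, Complex.normSq (W i j) = 1 := by
    intro i
    have h1 : (W * star W) i i = 1 := by
      rw [Matrix.mem_unitaryGroup_iff.mp hN.eigenvectorUnitary.2]; simp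
    have : ∑ j, ((Complex.normSq (W i j) : ℝ) : ℂ) = 1 := by
      rw [← h1, Matrix.mul_apply]
      refine Finset.sum_congr rfl fun j _ => ?_
      simp only [Matrix.star_apply, RCLike.star_def]
      rw [Complex.mul_conj]
    have := congrArg Complex.re this
    push_cast [Complex.re_sum] at this
    simpa using this
  have hcol : ∀ j, ∑ i, Complex.normSq (W i j) = 1 := by
    intro j
    have h1 : (star W * W) j j = 1 := by
      rw [Matrix.mem_unitaryGroup_iff'.mp hN.eigenvectorUnitary.2]; simp
    have : ∑ i, ((Complex.normSq (W i j) : ℝ) : ℂ) = 1 := by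
      rw [← h1, Matrix.mul_apply]
      refine Finset.sum_congr rfl fun i _ => ?_
      simp only [Matrix.star_apply, RCLike.star_def]
      rw [mul_comm, Complex.mul_conj]
    have := congrArg Complex.re this
    push_cast [Complex.re_sum] at this
    simpa using this
  have jens : ∀ i, Real.exp ((N i i).re) ≤ ∑ j, Complex.normSq (W i j) * Real.exp (μ j) := by
    intro i
    rw [hdiagN i]
    have := convexOn_exp.map_sum_le (t := Finset.univ) (w := fun j => Complex.normSq (W i j))
      (p := μ) (fun j _ => Complex.normSq_nonneg _) (hrow i) (fun j _ => Set.mem_univ _)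
    simpa [smul_eq_mul] using this
  calc ∑ i, Real.exp ((N i i).re)
      ≤ ∑ i, ∑ j, Complex.normSq (W i j) * Real.exp (μ j) :=
        Finset.sum_le_sum fun i _ => jens i
    _ = ∑ j, Real.exp (μ j) := by
        rw [Finset.sum_comm]
        refine Finset.sum_congr rfl fun j _ => ?_
        rw [← Finset.sum_mul, hcol j, one_mul]
    _ = (Matrix.trace (mexp N)).re := by
        rw [trace_mexp N hN, Complex.ofReal_re]

-- Gibbs / Jensen step
lemma gibbs (hn : 0 < n) (d x : Fin n → ℝ) :
    (∑ i, Real.exp (d i)) * Real.exp ((∑ i, Real.exp (d i) * x i) / (∑ i, Real.exp (d i)))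
      ≤ ∑ i, Real.exp (d i + x i) := by
  haveI : Nonempty (Fin n) := ⟨⟨0, hn⟩⟩
  set Z : ℝ := ∑ i, Real.exp (d i) with hZ
  have hZpos : 0 < Z := Finset.sum_pos (fun i _ => Real.exp_pos _) Finset.univ_nonempty
  have hw1 : ∑ i, Real.exp (d i) / Z = 1 := by
    rw [← Finset.sum_div, div_self hZpos.ne']
  have := convexOn_exp.map_sum_le (t := Finset.univ) (w := fun i => Real.exp (d i) / Z)
    (p := x) (fun i _ => by positivity) hw1 (fun i _ => Set.mem_univ _)
  have h2 : (∑ i, Real.exp (d i) * x i) / Z = ∑ i, (Real.exp (d i) / Z) • x i := by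
    rw [Finset.sum_div]
    refine Finset.sum_congr rfl fun i _ => ?_
    rw [smul_eq_mul]; ring
  rw [h2]
  calc Z * Real.exp (∑ i, (Real.exp (d i) / Z) • x i)
      ≤ Z * ∑ i, (Real.exp (d i) / Z) * Real.exp (x i) := by
        exact mul_le_mul_of_nonneg_left this hZpos.le
    _ = ∑ i, Real.exp (d i + x i) := by
        rw [Finset.mul_sum]
        refine Finset.sum_congr rfl fun i _ => ?_
        rw [Real.exp_add]
        field_simp

lemma pb (hn : 0 < n) (H V : Matrix (Fin n) (Fin n) ℂ)
    (hH : H.IsHermitian) (hV : V.IsHermitian) :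
    (Matrix.trace (mexp H)).re *
      Real.exp ((Matrix.trace (mexp H * V)).re / (Matrix.trace (mexp H)).re)
      ≤ (Matrix.trace (mexp (H + V))).re := by
  set U : Matrix (Fin n) (Fin n) ℂ := (hH.eigenvectorUnitary : Matrix (Fin n) (Fin n) ℂ) with hU
  set d : Fin n → ℝ := hH.eigenvalues with hd
  set V' : Matrix (Fin n) (Fin n) ℂ := star U * V * U with hV'
  have hV'herm : V'.IsHermitian := by
    rw [hV']
    unfold Matrix.IsHermitian
    rw [Matrix.conjTranspose_mul, Matrix.conjTranspose_mul]
    simp only [Matrix.star_eq_conjTranspose, Matrix.conjTranspose_conjTranspose, hV.eq]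
    rw [mul_assoc]
  have hUmem := hH.eigenvectorUnitary.2
  have hsU : U⁻¹ = star U := unitary_inv_eq_star U hUmem
  have hUu : IsUnit U :=
    isUnit_iff_exists.mpr ⟨star U, Matrix.mem_unitaryGroup_iff.mp hUmem,
      Matrix.mem_unitaryGroup_iff'.mp hUmem⟩
  set Z : ℝ := ∑ i, Real.exp (d i) with hZ
  haveI : Nonempty (Fin n) := ⟨⟨0, hn⟩⟩
  have hZpos : 0 < Z := Finset.sum_pos (fun i _ => Real.exp_pos _) Finset.univ_nonempty
  -- trace of mexp H
  have h1 : (Matrix.trace (mexp H)).re = Z := by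
    rw [trace_mexp H hH, Complex.ofReal_re]
  -- trace of mexp H * V
  have h2 : (Matrix.trace (mexp H * V)).re = ∑ i, Real.exp (d i) * (V' i i).re := by
    have : Matrix.trace (mexp H * V)
        = Matrix.trace (Matrix.diagonal (fun i => (Real.exp (d i) : ℂ)) * V') := by
      rw [mexp_hermitian H hH]
      rw [show (U * Matrix.diagonal (fun i => (Real.exp (d i) : ℂ)) * star U) * V
          = U * (Matrix.diagonal (fun i => (Real.exp (d i) : ℂ)) * star U * V) by
        simp only [mul_assoc]]
      rw [Matrix.trace_mul_comm, hV']
      simp only [mul_assoc]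
    rw [this]
    rw [show Matrix.trace (Matrix.diagonal (fun i => (Real.exp (d i) : ℂ)) * V')
        = ∑ i, (Real.exp (d i) : ℂ) * V' i i by
      simp [Matrix.trace, Matrix.diag, Matrix.diagonal_mul]]
    rw [Complex.re_sum]
    exact Finset.sum_congr rfl fun i _ => Complex.re_ofReal_mul _ _
  -- conjugated H + V
  set N : Matrix (Fin n) (Fin n) ℂ :=
    Matrix.diagonal (Complex.ofReal ∘ d) + V' with hN
  have hNherm : N.IsHermitian := by
    refine Matrix.IsHermitian.add ?_ hV'herm
    rw [Matrix.isHermitian_diagonal_iff]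
    intro i; exact Complex.conj_ofReal _
  have h3 : Matrix.trace (mexp (H + V)) = Matrix.trace (mexp N) := by
    have hconj : star U * (H + V) * U = N := by
      have hD : star U * H * U = Matrix.diagonal (Complex.ofReal ∘ d) := by
        have := hH.conjStarAlgAut_star_eigenvectorUnitary
        rw [Unitary.conjStarAlgAut_star_apply] at this
        exact this
      rw [hN, mul_add, add_mul, hD, hV']
    calc Matrix.trace (mexp (H + V))
        = Matrix.trace (star U * mexp (H + V) * U) := by
          rw [Matrix.trace_mul_cycle, Matrix.mem_unitaryGroup_iff.mp hUmem, one_mul]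
      _ = Matrix.trace (mexp (star U * (H + V) * U)) := by
          rw [← hsU, mexp, mexp, Matrix.exp_conj' _ _ hUu]
      _ = Matrix.trace (mexp N) := by rw [hconj]
  have h4 : ∀ i, (N i i).re = d i + (V' i i).re := by
    intro i
    rw [hN]
    simp [Matrix.add_apply, Matrix.diagonal_apply_eq]
  rw [h1, h2]
  calc Z * Real.exp ((∑ i, Real.exp (d i) * (V' i i).re) / Z)
      ≤ ∑ i, Real.exp (d i + (V' i i).re) := gibbs hn d _
    _ = ∑ i, Real.exp ((N i i).re) :=
        Finset.sum_congr rfl fun i _ => by rw [h4 i]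
    _ ≤ (Matrix.trace (mexp N)).re := peierls N hNherm
    _ = (Matrix.trace (mexp (H + V))).re := by rw [h3]

end AuxPB

/-- the affine map `B ↦ Φ_ρ(A) + Tr τ_A(B - A)` is a supporting plane of
the potential `Φ_ρ`: `Φ_ρ(B) ≥ Φ_ρ(A) + Tr(τ_A (B - A))`. -/
theorem stmt15 (n : ℕ) (hn : 1 ≤ n) (ρ : Matrix (Fin n) (Fin n) ℂ)
    (hρ : ρ.PosDef) (hρ1 : ρ.trace = 1)
    (A B : Matrix (Fin n) (Fin n) ℂ) (hA : A.IsHermitian) (hB : B.IsHermitian) :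
    potential ρ A + (Matrix.trace (tauOf ρ A * (B - A))).re ≤ potential ρ B := by
  have hn' : 0 < n := hn
  haveI : Nonempty (Fin n) := ⟨⟨0, hn'⟩⟩
  have hmlog : (mlog ρ).IsHermitian := cfc_predicate Real.log ρ
  set H : Matrix (Fin n) (Fin n) ℂ := mlog ρ + A with hHdef
  have hH : H.IsHermitian := hmlog.add hA
  have hV : (B - A).IsHermitian := hB.sub hA
  have hHB : mlog ρ + B = H + (B - A) := by rw [hHdef]; abel
  set Z : ℝ := ∑ i, Real.exp (hH.eigenvalues i) with hZ
  have hZpos : 0 < Z := Finset.sum_pos (fun i _ => Real.exp_pos _) Finset.univ_nonempty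
  have htr : Matrix.trace (mexp H) = (Z : ℂ) := trace_mexp H hH
  have htrre : (Matrix.trace (mexp H)).re = Z := by rw [htr, Complex.ofReal_re]
  set S : ℝ := (Matrix.trace (mexp H * (B - A))).re with hS
  have hPB := pb hn' H (B - A) hH hV
  rw [htrre] at hPB
  have hT : 0 < (Matrix.trace (mexp (H + (B - A)))).re :=
    lt_of_lt_of_le (by positivity) hPB
  have htau : (Matrix.trace (tauOf ρ A * (B - A))).re = S / Z := by
    rw [tauOf, ← hHdef, htr, smul_mul_assoc, Matrix.trace_smul, ← Complex.ofReal_inv,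
      smul_eq_mul, Complex.re_ofReal_mul, ← hS, inv_mul_eq_div]
  have hpotA : potential ρ A = Real.log Z := by rw [potential, ← hHdef, htrre]
  have hpotB : potential ρ B = Real.log (Matrix.trace (mexp (H + (B - A)))).re := by
    rw [potential, hHB]
  rw [hpotA, hpotB, htau]
  have hlog := Real.log_le_log (by positivity) hPB
  rwa [Real.log_mul hZpos.ne' (Real.exp_pos _).ne', Real.log_exp] at hlog
end
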